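/- arXiv:2502.04261 — 8 statements merged into one kernel-verified Lean document; each statement's English description precedes it below -/
import Mathlib

section
/- Let m ≥ 2 and n ≥ 1, let T be a nontrivial subgroup of the symmetric group on Fin m and B a subgroup of the symmetric group on Fin n. Realize the wreath product W = T ≀ B as the group of pairs (f, b) with f : Fin n → T and b ∈ B, acting on Fin m × Fin n by (f, b)·(i, j) = (f(j) i, b j). For a permutation σ of a finite set S define ind(σ) = |S| − (number of orbits of σ on S, counting fixed points as orbits). Then the minimum of ind(g) over all nontrivial g ∈ W (acting on Fin m × Fin n) equals the minimum of ind(t) over all nontrivial t ∈ T (acting on Fin m); moreover the nontrivial elements of W attaining this minimum are exactly the pairs (f, 1) such that there is exactly one index j₀ ∈ Fin n with f(j₀) ≠ 1, and this f(j₀) attains the minimal index in T. -/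
/-- The index of a permutation: `|S|` minus the number of orbits (cycles, with fixed
points counted as cycles of length 1). -/
noncomputable def permIndex {S : Type*} (σ : Equiv.Perm S) : ℕ :=
  Nat.card S - Nat.card (MulAction.orbitRel.Quotient (Subgroup.zpowers σ) S)

/-- The element of the imprimitive wreath product `T ≀ B` given by the pair `(f, b)`,
acting on `Fin m × Fin n` by `(f, b)·(i, j) = (f j i, b j)`. -/
def wperm {m n : ℕ} (f : Fin n → Equiv.Perm (Fin m)) (b : Equiv.Perm (Fin n)) :
    Equiv.Perm (Fin m × Fin n) where
  toFun p := (f p.2 p.1, b p.2)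
  invFun p := ((f (b.symm p.2)).symm p.1, b.symm p.2)
  left_inv p := by cases p; simp
  right_inv p := by cases p; simp

open MulAction Equiv
section Aux

variable {α : Type*}

lemma orbitRel_zpowers_iff (σ : Equiv.Perm α) (x y : α) :
    MulAction.orbitRel (Subgroup.zpowers σ) α x y ↔ ∃ k : ℤ, (σ ^ k) y = x := by
  rw [MulAction.orbitRel_apply, MulAction.mem_orbit_iff]
  constructor
  · rintro ⟨⟨g, k, rfl⟩, h⟩
    exact ⟨k, h⟩
  · rintro ⟨k, h⟩
    exact ⟨⟨σ ^ k, k, rfl⟩, h⟩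

lemma card_orbitQuot_le [Finite α] (σ : Equiv.Perm α) :
    Nat.card (MulAction.orbitRel.Quotient (Subgroup.zpowers σ) α) ≤ Nat.card α :=
  Nat.card_le_card_of_surjective _ Quotient.mk''_surjective

lemma card_orbitQuot_one [Finite α] :
    Nat.card (MulAction.orbitRel.Quotient (Subgroup.zpowers (1 : Equiv.Perm α)) α)
      = Nat.card α := by
  refine (Nat.card_eq_of_bijective (Quotient.mk'' : α → _) ⟨fun x y h => ?_,
    Quotient.mk''_surjective⟩).symm
  have := Quotient.eq''.mp h
  rw [orbitRel_zpowers_iff] at this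
  obtain ⟨k, hk⟩ := this
  simpa using hk.symm

lemma card_orbitQuot_lt [Finite α] {σ : Equiv.Perm α} (h : σ ≠ 1) :
    Nat.card (MulAction.orbitRel.Quotient (Subgroup.zpowers σ) α) < Nat.card α := by
  classical
  have : Fintype α := Fintype.ofFinite α
  have hQ : Fintype (MulAction.orbitRel.Quotient (Subgroup.zpowers σ) α) :=
    Fintype.ofFinite _
  rw [Nat.card_eq_fintype_card, Nat.card_eq_fintype_card]
  refine Fintype.card_lt_of_surjective_not_injective _ Quotient.mk''_surjective fun hinj => h ?_
  ext x
  have : (Quotient.mk'' (σ x) : MulAction.orbitRel.Quotient (Subgroup.zpowers σ) α)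
      = Quotient.mk'' x := Quotient.sound' ((orbitRel_zpowers_iff σ _ _).mpr ⟨1, by simp⟩)
  simpa using hinj this

lemma permIndex_one [Finite α] : permIndex (1 : Equiv.Perm α) = 0 := by
  rw [permIndex, card_orbitQuot_one, Nat.sub_self]

lemma permIndex_pos [Finite α] {σ : Equiv.Perm α} (h : σ ≠ 1) : 1 ≤ permIndex σ := by
  have := card_orbitQuot_lt h
  rw [permIndex]
  omega

lemma permIndex_le [Finite α] [Nonempty α] (σ : Equiv.Perm α) :
    permIndex σ ≤ Nat.card α - 1 := by
  have h1 : 1 ≤ Nat.card (MulAction.orbitRel.Quotient (Subgroup.zpowers σ) α) :=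
    Nat.one_le_iff_ne_zero.mpr (Nat.card_ne_zero.mpr ⟨⟨Quotient.mk'' (Classical.arbitrary α)⟩,
      Quotient.finite _⟩)
  have := card_orbitQuot_le σ
  have hpos : 0 < Nat.card α := Nat.card_pos
  rw [permIndex]
  omega

end Aux

section Wperm

variable {m n : ℕ}

lemma wperm_apply (f : Fin n → Equiv.Perm (Fin m)) (b : Equiv.Perm (Fin n)) (p) :
    wperm f b p = (f p.2 p.1, b p.2) := rfl

lemma wperm_inv_apply (f : Fin n → Equiv.Perm (Fin m)) (b : Equiv.Perm (Fin n)) (p) :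
    (wperm f b)⁻¹ p = ((f (b.symm p.2)).symm p.1, b.symm p.2) := rfl

lemma wperm_zpow_snd (f : Fin n → Equiv.Perm (Fin m)) (b : Equiv.Perm (Fin n)) (k : ℤ) :
    ∀ p, ((wperm f b ^ k) p).2 = (b ^ k) p.2 := by
  induction k using Int.induction_on with
  | zero => simp
  | succ k ih =>
      intro p
      rw [zpow_add_one, zpow_add_one, Equiv.Perm.mul_apply, Equiv.Perm.mul_apply, ih, wperm_apply]
  | pred k ih =>
      intro p
      rw [zpow_sub_one, zpow_sub_one, Equiv.Perm.mul_apply, Equiv.Perm.mul_apply, ih]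
      rfl

lemma wperm_one_zpow (f : Fin n → Equiv.Perm (Fin m)) (k : ℤ) :
    ∀ p : Fin m × Fin n, (wperm f 1 ^ k) p = ((f p.2 ^ k) p.1, p.2) := by
  induction k using Int.induction_on with
  | zero => simp
  | succ k ih =>
      intro p
      rw [zpow_add_one, Equiv.Perm.mul_apply, ih]
      simp [wperm_apply, zpow_add_one, Equiv.Perm.mul_apply]
  | pred k ih =>
      intro p
      rw [zpow_sub_one, Equiv.Perm.mul_apply, ih]
      simp [wperm_inv_apply, zpow_sub_one, Equiv.Perm.mul_apply]
      exact ⟨rfl, rfl⟩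

lemma wperm_eq_one_iff (hm : 1 ≤ m) (f : Fin n → Equiv.Perm (Fin m))
    (b : Equiv.Perm (Fin n)) : wperm f b = 1 ↔ b = 1 ∧ ∀ j, f j = 1 := by
  constructor
  · intro h
    have h' : ∀ p : Fin m × Fin n, (f p.2 p.1, b p.2) = p := fun p => by
      have := Equiv.ext_iff.mp h p; simpa [wperm_apply] using this
    have i0 : Fin m := ⟨0, hm⟩
    constructor
    · exact Equiv.ext fun j => by simpa using congrArg Prod.snd (h' (i0, j))
    · exact fun j => Equiv.ext fun i => by simpa using congrArg Prod.fst (h' (i, j))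
  · rintro ⟨rfl, hf⟩
    ext p
    · simp [wperm_apply, hf p.2]
    · simp [wperm_apply]

noncomputable def orbitQuot_wperm_one_equiv {m n : ℕ} (f : Fin n → Equiv.Perm (Fin m)) :
    MulAction.orbitRel.Quotient (Subgroup.zpowers (wperm f 1)) (Fin m × Fin n)
      ≃ Σ j : Fin n, MulAction.orbitRel.Quotient (Subgroup.zpowers (f j)) (Fin m) := by
  refine Equiv.ofBijective (Quotient.lift (fun p : Fin m × Fin n =>
    (⟨p.2, Quotient.mk'' p.1⟩ : Σ j : Fin n,
      MulAction.orbitRel.Quotient (Subgroup.zpowers (f j)) (Fin m))) ?_) ⟨?_, ?_⟩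
  · rintro ⟨i, j⟩ ⟨i', j'⟩ h
    obtain ⟨k, hk⟩ := (orbitRel_zpowers_iff _ _ _).mp h
    rw [wperm_one_zpow] at hk
    obtain ⟨h1, h2⟩ := Prod.ext_iff.mp hk
    dsimp at h1 h2
    subst h2
    exact congrArg (Sigma.mk j') (Quotient.sound' ((orbitRel_zpowers_iff _ _ _).mpr ⟨k, h1⟩))
  · intro q1 q2
    refine Quotient.inductionOn₂ q1 q2 fun p q h => ?_
    simp only [Quotient.lift_mk] at h
    obtain ⟨h1, h2⟩ := Sigma.mk.inj_iff.mp h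
    obtain ⟨i, j⟩ := p; obtain ⟨i', j'⟩ := q
    dsimp at h1 h2
    subst h1
    have h3 : (Quotient.mk'' i : MulAction.orbitRel.Quotient (Subgroup.zpowers (f j)) (Fin m))
        = Quotient.mk'' i' := eq_of_heq h2
    obtain ⟨k, hk⟩ := (orbitRel_zpowers_iff _ _ _).mp (Quotient.exact' h3)
    exact Quotient.sound' ((orbitRel_zpowers_iff _ _ _).mpr
      ⟨k, by rw [wperm_one_zpow]; exact Prod.ext hk rfl⟩)
  · rintro ⟨j, qi⟩
    refine Quotient.inductionOn qi fun i => ?_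
    exact ⟨Quotient.mk'' (i, j), rfl⟩

lemma permIndex_wperm_one {m n : ℕ} (f : Fin n → Equiv.Perm (Fin m)) :
    permIndex (wperm f 1) = ∑ j : Fin n, permIndex (f j) := by
  classical
  have hcard : Nat.card (MulAction.orbitRel.Quotient (Subgroup.zpowers (wperm f 1))
      (Fin m × Fin n)) = ∑ j : Fin n, Nat.card
        (MulAction.orbitRel.Quotient (Subgroup.zpowers (f j)) (Fin m)) := by
    rw [Nat.card_congr (orbitQuot_wperm_one_equiv f)]
    have : ∀ j : Fin n, Fintype (MulAction.orbitRel.Quotient (Subgroup.zpowers (f j)) (Fin m)) :=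
      fun j => Fintype.ofFinite _
    rw [Nat.card_eq_fintype_card, Fintype.card_sigma]
    exact Finset.sum_congr rfl fun j _ => (Nat.card_eq_fintype_card).symm
  have hle : ∀ j : Fin n, Nat.card (MulAction.orbitRel.Quotient (Subgroup.zpowers (f j))
      (Fin m)) ≤ Nat.card (Fin m) := fun j => card_orbitQuot_le (f j)
  unfold permIndex
  have hsum := Finset.sum_tsub_distrib (s := (Finset.univ : Finset (Fin n)))
      (f := fun _ : Fin n => Nat.card (Fin m))
      (g := fun j => Nat.card (MulAction.orbitRel.Quotient (Subgroup.zpowers (f j)) (Fin m)))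
      (fun j _ => hle j)
  rw [hcard, hsum, Finset.sum_const, Finset.card_univ, Fintype.card_fin]
  congr 1
  simp [Nat.card_eq_fintype_card, mul_comm]

lemma card_orbitQuot_wperm_le {m n : ℕ} (f : Fin n → Equiv.Perm (Fin m))
    (b : Equiv.Perm (Fin n)) :
    Nat.card (MulAction.orbitRel.Quotient (Subgroup.zpowers (wperm f b)) (Fin m × Fin n))
      ≤ m * Nat.card (MulAction.orbitRel.Quotient (Subgroup.zpowers b) (Fin n)) := by
  classical
  set Qw := MulAction.orbitRel.Quotient (Subgroup.zpowers (wperm f b)) (Fin m × Fin n) with hQw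
  set Qb := MulAction.orbitRel.Quotient (Subgroup.zpowers b) (Fin n) with hQb
  let J : Qb → Finset (Fin n) := fun c => Finset.univ.filter (fun y => Quotient.mk'' y = c)
  have hJne : ∀ c : Qb, (J c).Nonempty := fun c =>
    Quotient.inductionOn' c (fun y => ⟨y, by simp [J]⟩)
  let jmin : Qb → Fin n := fun c => (J c).min' (hJne c)
  have hjmin : ∀ c : Qb, (Quotient.mk'' (jmin c) : Qb) = c := fun c => by
    have := (J c).min'_mem (hJne c)
    simpa [J] using this
  let I : Qw → Finset (Fin m) := fun q => Finset.univ.filter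
      (fun i => MulAction.orbitRel (Subgroup.zpowers (wperm f b)) (Fin m × Fin n)
        (i, jmin (Quotient.mk'' (Quotient.out q).2)) (Quotient.out q))
  have hIne : ∀ q : Qw, (I q).Nonempty := by
    intro q
    have hj : (Quotient.mk'' (jmin (Quotient.mk'' (Quotient.out q).2)) : Qb) = Quotient.mk'' (Quotient.out q).2 :=
      hjmin _
    obtain ⟨k, hk⟩ := (orbitRel_zpowers_iff _ _ _).mp (Quotient.exact' hj)
    refine ⟨((wperm f b ^ k) (Quotient.out q)).1, ?_⟩
    simp only [I, Finset.mem_filter, Finset.mem_univ, true_and]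
    have h2 : ((wperm f b ^ k) (Quotient.out q)).2 = jmin (Quotient.mk'' (Quotient.out q).2) := by
      rw [wperm_zpow_snd]; exact hk
    rw [show ((((wperm f b) ^ k) (Quotient.out q)).1, jmin (Quotient.mk'' (Quotient.out q).2))
        = (wperm f b ^ k) (Quotient.out q) from by rw [← h2]]
    exact (orbitRel_zpowers_iff _ _ _).mpr ⟨k, rfl⟩
  let F : Qw → Fin m × Qb := fun q => ((I q).min' (hIne q), Quotient.mk'' (Quotient.out q).2)
  have hF : Function.Injective F := by
    intro q1 q2 h
    obtain ⟨h1, h2⟩ := Prod.ext_iff.mp h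
    dsimp only [F] at h1 h2
    have hj : jmin (Quotient.mk'' (Quotient.out q1).2) = jmin (Quotient.mk'' (Quotient.out q2).2) :=
      congrArg jmin h2
    have m1 : (I q1).min' (hIne q1) ∈ I q1 := Finset.min'_mem _ _
    have m2 : (I q2).min' (hIne q2) ∈ I q2 := Finset.min'_mem _ _
    simp only [I, Finset.mem_filter, Finset.mem_univ, true_and] at m1 m2
    rw [h1, hj] at m1
    have hrel : MulAction.orbitRel (Subgroup.zpowers (wperm f b)) (Fin m × Fin n)
        (Quotient.out q1) (Quotient.out q2) := Setoid.trans' _ (Setoid.symm' _ m1) m2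
    rw [← Quotient.out_eq' q1, ← Quotient.out_eq' q2]
    exact Quotient.sound' hrel
  have hcard := Nat.card_le_card_of_injective F hF
  rwa [Nat.card_prod, Nat.card_eq_fintype_card (α := Fin m), Fintype.card_fin] at hcard

lemma permIndex_wperm_ge {m n : ℕ} (hn : 1 ≤ n) (f : Fin n → Equiv.Perm (Fin m))
    {b : Equiv.Perm (Fin n)} (hb : b ≠ 1) : m ≤ permIndex (wperm f b) := by
  have h1 := card_orbitQuot_wperm_le f b
  have h2 := card_orbitQuot_lt hb
  rw [show Nat.card (Fin n) = n from Nat.card_eq_fintype_card.trans (Fintype.card_fin n)] at h2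
  have h3 : m * Nat.card (MulAction.orbitRel.Quotient (Subgroup.zpowers b) (Fin n)) + m
      ≤ m * n := by
    calc m * Nat.card (MulAction.orbitRel.Quotient (Subgroup.zpowers b) (Fin n)) + m
        = m * (Nat.card (MulAction.orbitRel.Quotient (Subgroup.zpowers b) (Fin n)) + 1) := by
          ring
      _ ≤ m * n := Nat.mul_le_mul_left m (by omega)
  rw [permIndex, show Nat.card (Fin m × Fin n) = m * n from by
    rw [Nat.card_prod]
    rw [show Nat.card (Fin m) = m from Nat.card_eq_fintype_card.trans (Fintype.card_fin m),
      show Nat.card (Fin n) = n from Nat.card_eq_fintype_card.trans (Fintype.card_fin n)]]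
  omega

end Wperm

theorem min_index_wreath (m n : ℕ) (hm : 2 ≤ m) (hn : 1 ≤ n)
    (T : Subgroup (Equiv.Perm (Fin m))) (hT : T ≠ ⊥)
    (B : Subgroup (Equiv.Perm (Fin n))) :
    sInf {k : ℕ | ∃ (f : Fin n → Equiv.Perm (Fin m)) (b : Equiv.Perm (Fin n)),
        (∀ j, f j ∈ T) ∧ b ∈ B ∧ wperm f b ≠ 1 ∧ permIndex (wperm f b) = k}
      = sInf {k : ℕ | ∃ t ∈ T, t ≠ 1 ∧ permIndex t = k} ∧
    ∀ (f : Fin n → Equiv.Perm (Fin m)) (b : Equiv.Perm (Fin n)),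
      (∀ j, f j ∈ T) → b ∈ B → wperm f b ≠ 1 →
      (permIndex (wperm f b) = sInf {k : ℕ | ∃ t ∈ T, t ≠ 1 ∧ permIndex t = k} ↔
        b = 1 ∧ ∃ j₀ : Fin n, f j₀ ≠ 1 ∧ (∀ j, j ≠ j₀ → f j = 1) ∧
          permIndex (f j₀) = sInf {k : ℕ | ∃ t ∈ T, t ≠ 1 ∧ permIndex t = k}) := by
  classical
  have hm1 : 1 ≤ m := by omega
  haveI : Nonempty (Fin m) := ⟨⟨0, by omega⟩⟩
  set M := sInf {k : ℕ | ∃ t ∈ T, t ≠ 1 ∧ permIndex t = k} with hMdef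
  obtain ⟨a, ha⟩ := Subgroup.ne_bot_iff_exists_ne_one.mp hT
  have hTne : {k : ℕ | ∃ t ∈ T, t ≠ 1 ∧ permIndex t = k}.Nonempty :=
    ⟨permIndex a.1, a.1, a.2, fun h => ha (OneMemClass.coe_eq_one.mp h), rfl⟩
  obtain ⟨t₀, ht₀T, ht₀ne, ht₀ind⟩ := Nat.sInf_mem hTne
  have hM1 : 1 ≤ M := by
    rw [hMdef, ← ht₀ind]
    exact permIndex_pos ht₀ne
  have hMm : M < m := by
    have := permIndex_le t₀
    rw [show Nat.card (Fin m) = m from Nat.card_eq_fintype_card.trans (Fintype.card_fin m)]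
      at this
    omega
  have hMle : ∀ t : Equiv.Perm (Fin m), t ∈ T → t ≠ 1 → M ≤ permIndex t :=
    fun t h1 h2 => Nat.sInf_le ⟨t, h1, h2, rfl⟩
  -- characterization for b = 1
  have hsum : ∀ f : Fin n → Equiv.Perm (Fin m), (∀ j, f j ∈ T) → wperm f 1 ≠ 1 →
      (permIndex (wperm f 1) = M ↔ ∃ j₀ : Fin n, f j₀ ≠ 1 ∧ (∀ j, j ≠ j₀ → f j = 1) ∧
        permIndex (f j₀) = M) := by
    intro f hfT hne
    have hex : ∃ j, f j ≠ 1 := by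
      by_contra h
      push_neg at h
      exact hne ((wperm_eq_one_iff hm1 f 1).mpr ⟨rfl, h⟩)
    obtain ⟨j₁, hj₁⟩ := hex
    rw [permIndex_wperm_one]
    constructor
    · intro hS
      have hunique : ∀ j, j ≠ j₁ → f j = 1 := by
        intro j₂ hj₂ne
        by_contra hj₂
        have hpair : permIndex (f j₁) + permIndex (f j₂) ≤ ∑ j : Fin n, permIndex (f j) := by
          have := Finset.sum_le_sum_of_subset (f := fun j => permIndex (f j))
            (Finset.subset_univ ({j₁, j₂} : Finset (Fin n)))
          rwa [Finset.sum_pair (Ne.symm hj₂ne)] at this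
        have h1 := hMle _ (hfT j₁) hj₁
        have h2 := hMle _ (hfT j₂) hj₂
        omega
      have hS1 : ∑ j : Fin n, permIndex (f j) = permIndex (f j₁) :=
        Finset.sum_eq_single j₁ (fun j _ hj => by rw [hunique j hj, permIndex_one])
          (fun h => absurd (Finset.mem_univ j₁) h)
      exact ⟨j₁, hj₁, hunique, by rw [← hS1, hS]⟩
    · rintro ⟨j₀, hj₀, hone, hPI⟩
      rw [Finset.sum_eq_single j₀ (fun j _ hj => by rw [hone j hj, permIndex_one])
        (fun h => absurd (Finset.mem_univ j₀) h), hPI]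
  -- witness in the wreath set
  have hwit : M ∈ {k : ℕ | ∃ (f : Fin n → Equiv.Perm (Fin m)) (b : Equiv.Perm (Fin n)),
      (∀ j, f j ∈ T) ∧ b ∈ B ∧ wperm f b ≠ 1 ∧ permIndex (wperm f b) = k} := by
    set j₀ : Fin n := ⟨0, hn⟩
    refine ⟨fun j => if j = j₀ then t₀ else 1, 1, fun j => ?_, one_mem B, ?_, ?_⟩
    · by_cases h : j = j₀ <;> simp [h, ht₀T, one_mem]
    · intro h
      obtain ⟨-, h2⟩ := (wperm_eq_one_iff hm1 _ _).mp h
      exact ht₀ne (by simpa using h2 j₀)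
    · rw [permIndex_wperm_one, Finset.sum_eq_single j₀
        (fun j _ hj => by simp [hj, permIndex_one]) (fun h => absurd (Finset.mem_univ j₀) h)]
      simpa using ht₀ind
  have hlb : ∀ k ∈ {k : ℕ | ∃ (f : Fin n → Equiv.Perm (Fin m)) (b : Equiv.Perm (Fin n)),
      (∀ j, f j ∈ T) ∧ b ∈ B ∧ wperm f b ≠ 1 ∧ permIndex (wperm f b) = k}, M ≤ k := by
    rintro k ⟨f, b, hfT, hbB, hne, rfl⟩
    by_cases hb : b = 1
    · subst hb
      have hex : ∃ j, f j ≠ 1 := by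
        by_contra h
        push_neg at h
        exact hne ((wperm_eq_one_iff hm1 f 1).mpr ⟨rfl, h⟩)
      obtain ⟨j₁, hj₁⟩ := hex
      rw [permIndex_wperm_one]
      calc M ≤ permIndex (f j₁) := hMle _ (hfT j₁) hj₁
        _ ≤ ∑ j : Fin n, permIndex (f j) :=
          Finset.single_le_sum (f := fun j => permIndex (f j))
            (fun j _ => Nat.zero_le _) (Finset.mem_univ j₁)
    · have := permIndex_wperm_ge hn f hb
      omega
  refine ⟨le_antisymm (Nat.sInf_le hwit) (le_csInf ⟨M, hwit⟩ hlb), ?_⟩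
  intro f b hfT hbB hne
  constructor
  · intro hEq
    have hb : b = 1 := by
      by_contra hb
      have := permIndex_wperm_ge hn f hb
      omega
    subst hb
    exact ⟨rfl, (hsum f hfT hne).mp hEq⟩
  · rintro ⟨rfl, hex⟩
    exact (hsum f hfT hne).mpr hex
end

section
/- Let ℓ be an odd prime, d ≥ 1, and m = gcd(d, ℓ − 1). Let ρ : ZMod d → ZMod m be the natural reduction map (well defined since m ∣ d) and let ψ : (ZMod ℓ)ˣ → ZMod m be any surjective group homomorphism (one exists since (ZMod ℓ)ˣ is cyclic of order ℓ − 1 and m ∣ ℓ − 1). Let Γ = {(c, u) ∈ ZMod d × (ZMod ℓ)ˣ : ρ(c) = ψ(u)}, a subgroup of the product, and let S be the set of vectors v : ZMod d → ZMod ℓ that are supported at exactly one index and nonzero there. Then the formula (c, u)·v = u • (c • v), where (c • v)(i) = v(i + c), defines an action of Γ on S, and the number of orbits of Γ on S equals gcd(d, ℓ − 1). (This computes Türkelli's constant b_T(C_ℓ ≀ C_d, ℚ) = gcd(d, ℓ − 1) via the φ-twisted cyclotomic action of the fibered product G(π, φ).) -/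
/-- The `φ`-twisted cyclotomic action of a pair `(c, u) ∈ ZMod d × (ZMod ℓ)ˣ` on vectors:
`(c, u)·v = u • (c • v)` where `(c • v)(i) = v (i + c)`. -/
def twAct (ℓ d : ℕ) (p : ZMod d × (ZMod ℓ)ˣ) (v : ZMod d → ZMod ℓ) :
    ZMod d → ZMod ℓ :=
  fun i => (p.2 : ZMod ℓ) * v (i + p.1)

/-- A vector supported at `i` with unit value `a`. -/
def stdv (ℓ d : ℕ) (i : ZMod d) (a : (ZMod ℓ)ˣ) : ZMod d → ZMod ℓ :=
  fun j => if j = i then (a : ZMod ℓ) else 0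

theorem twAct_stdv (ℓ d : ℕ) (c : ZMod d) (u : (ZMod ℓ)ˣ) (i : ZMod d) (a : (ZMod ℓ)ˣ) :
    twAct ℓ d (c, u) (stdv ℓ d i a) = stdv ℓ d (i - c) (u * a) := by
  funext j
  simp only [twAct, stdv, eq_sub_iff_add_eq, mul_ite, mul_zero, Units.val_mul]

/-- The fiber of the invariant map. -/
def fib (ℓ d : ℕ) (ψ : (ZMod ℓ)ˣ →* Multiplicative (ZMod (Nat.gcd d (ℓ - 1))))
    (t : ZMod (Nat.gcd d (ℓ - 1))) : Set (ZMod d → ZMod ℓ) :=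
  {w | ∃ j b, ZMod.castHom (Nat.gcd_dvd_left d (ℓ - 1)) (ZMod (Nat.gcd d (ℓ - 1))) j
        + Multiplicative.toAdd (ψ b) = t ∧ w = stdv ℓ d j b}

theorem turkelli_b_of_Cl_wr_Cd (ℓ d : ℕ) (hℓ : ℓ.Prime) (hodd : Odd ℓ) (hd : 1 ≤ d)
    (ψ : (ZMod ℓ)ˣ →* Multiplicative (ZMod (Nat.gcd d (ℓ - 1))))
    (hψ : Function.Surjective ψ) :
    -- Γ, the fibered product, as a set of pairs
    let Γ : Set (ZMod d × (ZMod ℓ)ˣ) :=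
      {p | ZMod.castHom (Nat.gcd_dvd_left d (ℓ - 1)) (ZMod (Nat.gcd d (ℓ - 1))) p.1
        = Multiplicative.toAdd (ψ p.2)}
    -- S, the vectors supported at exactly one index and nonzero there
    let S : Set (ZMod d → ZMod ℓ) := {v | ∃! i, v i ≠ 0}
    -- the formula defines an action of Γ on S:
    ((∀ p ∈ Γ, ∀ v ∈ S, twAct ℓ d p v ∈ S) ∧
      (∀ v : ZMod d → ZMod ℓ, twAct ℓ d (0, 1) v = v) ∧
      (∀ p q : ZMod d × (ZMod ℓ)ˣ, ∀ v : ZMod d → ZMod ℓ,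
        twAct ℓ d (p.1 + q.1, p.2 * q.2) v = twAct ℓ d p (twAct ℓ d q v))) ∧
    -- and the number of orbits of Γ on S equals gcd(d, ℓ - 1):
    Nat.card ↥{o : Set (ZMod d → ZMod ℓ) |
        ∃ v ∈ S, o = {w | ∃ p ∈ Γ, w = twAct ℓ d p v}} = Nat.gcd d (ℓ - 1) := by
  haveI : Fact ℓ.Prime := ⟨hℓ⟩
  haveI : NeZero d := ⟨by omega⟩
  haveI : NeZero (Nat.gcd d (ℓ - 1)) := ⟨(Nat.gcd_pos_of_pos_left _ (by omega)).ne'⟩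
  intro Γ S
  set ρ : ZMod d →+* ZMod (Nat.gcd d (ℓ - 1)) :=
    ZMod.castHom (Nat.gcd_dvd_left d (ℓ - 1)) (ZMod (Nat.gcd d (ℓ - 1))) with hρ
  -- basic facts about stdv
  have stdv_mem : ∀ (i : ZMod d) (a : (ZMod ℓ)ˣ), stdv ℓ d i a ∈ S := by
    intro i a
    refine ⟨i, by simp [stdv, a.ne_zero], fun j hj => ?_⟩
    by_contra h
    simp [stdv, h] at hj
  have memS : ∀ v ∈ S, ∃ i a, v = stdv ℓ d i a := by
    intro v hv
    obtain ⟨i, hi, huniq⟩ := (hv : ∃! i, v i ≠ 0)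
    refine ⟨i, Units.mk0 (v i) hi, ?_⟩
    funext j
    simp only [stdv, Units.val_mk0]
    split
    · next h => rw [h]
    · next h =>
      by_contra hne
      exact h (huniq j hne)
  have stdv_inj : ∀ (i j : ZMod d) (a b : (ZMod ℓ)ˣ),
      stdv ℓ d i a = stdv ℓ d j b → i = j ∧ a = b := by
    intro i j a b h
    have hj := congrFun h j
    simp only [stdv, if_pos rfl] at hj
    have hij : j = i := by
      by_contra hji
      rw [if_neg hji] at hj
      exact b.ne_zero hj.symm
    subst hij
    rw [if_pos rfl] at hj
    exact ⟨rfl, Units.ext hj⟩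
  -- orbits are fibers of the invariant
  have orbit_eq : ∀ (i : ZMod d) (a : (ZMod ℓ)ˣ),
      {w | ∃ p ∈ Γ, w = twAct ℓ d p (stdv ℓ d i a)}
        = fib ℓ d ψ (ρ i + Multiplicative.toAdd (ψ a)) := by
    intro i a
    ext w
    constructor
    · rintro ⟨⟨c, u⟩, hp, rfl⟩
      have hp' : ρ c = Multiplicative.toAdd (ψ u) := hp
      rw [twAct_stdv]
      refine ⟨i - c, u * a, ?_, rfl⟩
      rw [map_sub, map_mul, toAdd_mul, hp']
      ring
    · rintro ⟨j, b, hinv, rfl⟩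
      refine ⟨(i - j, b * a⁻¹), ?_, ?_⟩
      · show ρ (i - j) = Multiplicative.toAdd (ψ (b * a⁻¹))
        rw [map_sub, map_mul, map_inv, toAdd_mul, toAdd_inv]
        linear_combination -hinv
      · rw [twAct_stdv, sub_sub_cancel, inv_mul_cancel_right]
  constructor
  · refine ⟨?_, ?_, ?_⟩
    · rintro ⟨c, u⟩ _ v hv
      obtain ⟨i, a, rfl⟩ := memS v hv
      rw [twAct_stdv]
      exact stdv_mem _ _
    · intro v
      funext i
      simp [twAct]
    · intro p q v
      funext i
      simp [twAct, mul_assoc, add_assoc]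
  -- counting orbits
  have hsurj : ∀ t : ZMod (Nat.gcd d (ℓ - 1)), ∃ i : ZMod d, ρ i = t := by
    intro t
    obtain ⟨n, rfl⟩ := ZMod.natCast_zmod_surjective t
    exact ⟨(n : ZMod d), map_natCast ρ n⟩
  have hOeq : {o : Set (ZMod d → ZMod ℓ) |
      ∃ v ∈ S, o = {w | ∃ p ∈ Γ, w = twAct ℓ d p v}} = Set.range (fib ℓ d ψ) := by
    ext o
    simp only [Set.mem_setOf_eq, Set.mem_range]
    constructor
    · rintro ⟨v, hv, rfl⟩
      obtain ⟨i, a, rfl⟩ := memS v hv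
      exact ⟨_, (orbit_eq i a).symm⟩
    · rintro ⟨t, rfl⟩
      obtain ⟨i, hi⟩ := hsurj t
      refine ⟨stdv ℓ d i 1, stdv_mem i 1, ?_⟩
      rw [orbit_eq i 1]
      congr 1
      rw [map_one, toAdd_one, add_zero, hi]
  have fib_inj : Function.Injective (fib ℓ d ψ) := by
    intro t t' h
    obtain ⟨i, hi⟩ := hsurj t
    have hmem : stdv ℓ d i 1 ∈ fib ℓ d ψ t :=
      ⟨i, 1, by rw [map_one, toAdd_one, add_zero, hi], rfl⟩
    rw [h] at hmem
    obtain ⟨j, b, hjb, heq⟩ := hmem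
    obtain ⟨rfl, rfl⟩ := stdv_inj _ _ _ _ heq
    rw [map_one, toAdd_one, add_zero, hi] at hjb
    exact hjb
  rw [hOeq, Nat.card_range_of_injective fib_inj, Nat.card_zmod]
end

section
/- Let ℓ be a prime, m ≥ 1, j ∈ ZMod m, and s ∈ (ZMod ℓ)ˣ. Let t = m / gcd(j, m) be the additive order of j in ZMod m. Then the number of vectors v : ZMod m → ZMod ℓ satisfying v(i + j) = s • v(i) for all i ∈ ZMod m equals ℓ^{gcd(j, m)} if s^t = 1, and equals 1 (only the zero vector) otherwise. In particular, the number of nonzero fixed vectors of the map v ↦ s • (j • v) is ℓ^{m/t} − 1 if s^t = 1 and 0 otherwise. -/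
private lemma iter_rel {ℓ m : ℕ} {c : ZMod ℓ} {j : ZMod m} {v : ZMod m → ZMod ℓ}
    (hv : ∀ i, v (i + j) = c * v i) (k : ℕ) (i : ZMod m) :
    v (i + k • j) = c ^ k * v i := by
  induction k generalizing i with
  | zero => simp
  | succ n ih =>
    have h1 : i + (n + 1) • j = (i + j) + n • j := by rw [succ_nsmul]; abel
    rw [h1, ih, hv, pow_succ]; ring

private lemma count_aux (ℓ m : ℕ) (hℓ : ℓ.Prime) (hm : 1 ≤ m) (j : ZMod m) (s : (ZMod ℓ)ˣ) :
    Nat.card {v : ZMod m → ZMod ℓ // ∀ i, v (i + j) = (s : ZMod ℓ) * v i}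
      = if s ^ (m / Nat.gcd j.val m) = 1 then ℓ ^ (Nat.gcd j.val m) else 1 := by
  haveI : NeZero m := ⟨by omega⟩
  haveI : NeZero ℓ := ⟨hℓ.ne_zero⟩
  haveI : Fact ℓ.Prime := ⟨hℓ⟩
  classical
  set d := Nat.gcd j.val m with hd
  set t := m / d with ht
  have hdm : d ∣ m := Nat.gcd_dvd_right _ _
  have hdj : d ∣ j.val := Nat.gcd_dvd_left _ _
  have hdpos : 0 < d := Nat.gcd_pos_of_pos_right _ (by omega)
  have hjv : ((j.val : ℕ) : ZMod m) = j := ZMod.natCast_rightInverse j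
  have hord : addOrderOf j = t := by
    conv_lhs => rw [← hjv]
    rw [ZMod.addOrderOf_coe _ (NeZero.ne m), Nat.gcd_comm]
  have htj : t • j = 0 := by rw [← hord]; exact addOrderOf_nsmul_eq_zero j
  by_cases hs : s ^ t = 1
  · rw [if_pos hs]
    -- z • j can be realized with a natural exponent
    have hzsmul : ∀ z : ℤ, z • j = (z % m).toNat • j := by
      intro z
      have hmj : (m : ℤ) • j = 0 := by
        rw [natCast_zsmul, nsmul_eq_mul]
        simp
      conv_lhs => rw [← Int.mul_ediv_add_emod z m]
      rw [add_zsmul, mul_comm, mul_zsmul, hmj, smul_zero, zero_add, ← natCast_zsmul]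
      congr 1
      exact (Int.toNat_of_nonneg (Int.emod_nonneg z (by exact_mod_cast (NeZero.ne m)))).symm
    obtain ⟨k₀, hk₀⟩ : ∃ k₀ : ℕ, (d : ZMod m) = k₀ • j := by
      refine ⟨((Nat.gcdA j.val m) % m).toNat, ?_⟩
      rw [← hzsmul, zsmul_eq_mul]
      have hb := Nat.gcd_eq_gcd_ab j.val m
      calc (d : ZMod m) = ((d : ℤ) : ZMod m) := by push_cast; ring
        _ = (((j.val : ℤ) * Nat.gcdA j.val m + (m : ℤ) * Nat.gcdB j.val m : ℤ) : ZMod m) := by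
            rw [hd, ← hb]
        _ = (Nat.gcdA j.val m : ZMod m) * j := by
            push_cast [hjv]
            rw [ZMod.natCast_self]
            ring
    have hrep : ∀ i : ZMod m, ∃ k : ℕ, i = ((i.val % d : ℕ) : ZMod m) + k • j := by
      intro i
      refine ⟨(i.val / d) * k₀, ?_⟩
      conv_lhs => rw [← ZMod.natCast_rightInverse i, ← Nat.mod_add_div i.val d]
      push_cast
      rw [mul_smul, ← hk₀, nsmul_eq_mul]
      ring
    choose K hK using hrep
    have hcancel : ∀ (x : ZMod m) (a b : ℕ), x + a • j = x + b • j → s ^ a = s ^ b := by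
      intro x a b hab
      have h1 : a • j = b • j := add_left_cancel hab
      have h2 : a ≡ b [MOD t] := by rw [← hord]; exact nsmul_eq_nsmul_iff_modEq.mp h1
      have h3 : orderOf s ∣ t := orderOf_dvd_of_pow_eq_one hs
      exact pow_eq_pow_iff_modEq.mpr (Nat.ModEq.of_dvd h3 h2)
    set R : ZMod m → Fin d := fun i => ⟨i.val % d, Nat.mod_lt _ hdpos⟩ with hR
    have hRj : ∀ i : ZMod m, R (i + j) = R i := by
      intro i
      obtain ⟨u, hu⟩ := hdj
      apply Fin.ext
      show (i + j).val % d = i.val % d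
      rw [ZMod.val_add, Nat.mod_mod_of_dvd _ hdm, hu, Nat.add_mul_mod_self_left]
    have hρ : Function.Bijective
        (fun (v : {v : ZMod m → ZMod ℓ // ∀ i, v (i + j) = (s : ZMod ℓ) * v i})
          (x : Fin d) => v.1 ((x : ℕ) : ZMod m)) := by
      constructor
      · intro v v' hvv
        refine Subtype.ext (funext fun i => ?_)
        have e1 : v.1 i = (s : ZMod ℓ) ^ (K i) * v.1 (((i.val % d : ℕ) : ZMod m)) := by
          conv_lhs => rw [hK i]
          exact iter_rel v.2 (K i) _
        have e2 : v'.1 i = (s : ZMod ℓ) ^ (K i) * v'.1 (((i.val % d : ℕ) : ZMod m)) := by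
          conv_lhs => rw [hK i]
          exact iter_rel v'.2 (K i) _
        have e3 : v.1 (((i.val % d : ℕ) : ZMod m)) = v'.1 (((i.val % d : ℕ) : ZMod m)) :=
          congrFun hvv (R i)
        rw [e1, e2, e3]
      · intro w
        set v : ZMod m → ZMod ℓ := fun i => (s : ZMod ℓ) ^ (K i) * w (R i) with hv
        have hvP : ∀ i, v (i + j) = (s : ZMod ℓ) * v i := by
          intro i
          have hrr : ((((i + j).val % d : ℕ)) : ZMod m) = (((i.val % d : ℕ)) : ZMod m) := by
            have := congrArg (fun x : Fin d => ((x : ℕ) : ZMod m)) (hRj i)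
            simpa using this
          have hexp : s ^ (K (i + j)) = s ^ (K i + 1) := by
            apply hcancel (((i.val % d : ℕ) : ZMod m))
            have h1 : i + j = ((i.val % d : ℕ) : ZMod m) + K (i + j) • j := by
              conv_lhs => rw [hK (i + j)]
              rw [hrr]
            have h2 : i + j = ((i.val % d : ℕ) : ZMod m) + (K i + 1) • j := by
              conv_lhs => rw [hK i]
              rw [succ_nsmul]; abel
            rw [← h1, ← h2]
          have hring : (s : ZMod ℓ) ^ (K (i + j)) = (s : ZMod ℓ) ^ (K i + 1) := by
            have := congrArg (Units.val) hexp
            simpa using this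
          show (s : ZMod ℓ) ^ (K (i + j)) * w (R (i + j))
              = (s : ZMod ℓ) * ((s : ZMod ℓ) ^ (K i) * w (R i))
          rw [hring, hRj i, pow_succ]; ring
        refine ⟨⟨v, hvP⟩, ?_⟩
        funext x
        show (s : ZMod ℓ) ^ (K ((x : ℕ) : ZMod m)) * w (R ((x : ℕ) : ZMod m)) = w x
        have hval : (((x : ℕ) : ZMod m)).val = (x : ℕ) := by
          rw [ZMod.val_natCast, Nat.mod_eq_of_lt (lt_of_lt_of_le x.2 (Nat.le_of_dvd (by omega) hdm))]
        have hRx : R ((x : ℕ) : ZMod m) = x := by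
          apply Fin.ext
          show (((x : ℕ) : ZMod m)).val % d = (x : ℕ)
          rw [hval, Nat.mod_eq_of_lt x.2]
        have hfix : (((((x : ℕ) : ZMod m)).val % d : ℕ) : ZMod m) = ((x : ℕ) : ZMod m) := by
          rw [hval, Nat.mod_eq_of_lt x.2]
        have hK1 : s ^ (K ((x : ℕ) : ZMod m)) = 1 := by
          have h1 := hK ((x : ℕ) : ZMod m)
          rw [hfix] at h1
          have h2 : ((x : ℕ) : ZMod m) + K ((x : ℕ) : ZMod m) • j
              = ((x : ℕ) : ZMod m) + 0 • j := by
            rw [zero_nsmul, add_zero, ← h1]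
          simpa using hcancel _ _ _ h2
        have hK1' : (s : ZMod ℓ) ^ (K ((x : ℕ) : ZMod m)) = 1 := by
          have := congrArg (Units.val) hK1
          simpa using this
        rw [hK1', hRx, one_mul]
    rw [Nat.card_eq_of_bijective _ hρ]
    simp [Nat.card_eq_fintype_card, ZMod.card]
  · rw [if_neg hs]
    have key : ∀ (w : ZMod m → ZMod ℓ), (∀ i, w (i + j) = (s : ZMod ℓ) * w i) → w = 0 := by
      intro w hw
      funext i
      have h1 := iter_rel hw t i
      rw [htj, add_zero] at h1
      have h2 : ((s : ZMod ℓ) ^ t - 1) * w i = 0 := by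
        rw [sub_mul, one_mul, ← h1]; ring
      have h3 : (s : ZMod ℓ) ^ t - 1 ≠ 0 := by
        intro h
        apply hs
        apply Units.ext
        rw [sub_eq_zero] at h
        simpa using h
      rcases mul_eq_zero.mp h2 with h | h
      · exact absurd h h3
      · simpa using h
    rw [Nat.card_eq_one_iff_unique]
    constructor
    · constructor
      rintro ⟨v, hv⟩ ⟨v', hv'⟩
      exact Subtype.ext ((key v hv).trans (key v' hv').symm)
    · exact ⟨⟨0, fun i => by simp⟩⟩

theorem count_twisted_eigenvectors (ℓ m : ℕ) (hℓ : ℓ.Prime) (hm : 1 ≤ m)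
    (j : ZMod m) (s : (ZMod ℓ)ˣ) :
    -- t = m / gcd(j, m) is the additive order of j in ZMod m
    addOrderOf j = m / Nat.gcd j.val m ∧
    -- number of vectors with v(i + j) = s • v(i) for all i
    Nat.card {v : ZMod m → ZMod ℓ // ∀ i, v (i + j) = (s : ZMod ℓ) * v i}
      = (if s ^ (m / Nat.gcd j.val m) = 1 then ℓ ^ (Nat.gcd j.val m) else 1) ∧
    -- number of nonzero fixed vectors of v ↦ s • (j • v)
    Nat.card {v : ZMod m → ZMod ℓ // v ≠ 0 ∧ ∀ i, (s : ZMod ℓ) * v (i + j) = v i}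
      = (if s ^ (m / Nat.gcd j.val m) = 1
          then ℓ ^ (m / (m / Nat.gcd j.val m)) - 1 else 0) := by
  haveI : NeZero m := ⟨by omega⟩
  haveI : NeZero ℓ := ⟨hℓ.ne_zero⟩
  classical
  have hord : addOrderOf j = m / Nat.gcd j.val m := by
    conv_lhs => rw [← ZMod.natCast_rightInverse j]
    rw [ZMod.addOrderOf_coe _ (NeZero.ne m), Nat.gcd_comm]
  refine ⟨hord, count_aux ℓ m hℓ hm j s, ?_⟩
  set t := m / Nat.gcd j.val m with htdef
  have hQ : ∀ v : ZMod m → ZMod ℓ,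
      (∀ i, (s : ZMod ℓ) * v (i + j) = v i)
        ↔ (∀ i, v (i + j) = ((s⁻¹ : (ZMod ℓ)ˣ) : ZMod ℓ) * v i) := by
    intro v
    constructor
    · intro h i
      rw [← h i, ← mul_assoc]
      simp
    · intro h i
      rw [h i, ← mul_assoc]
      simp
  have hcard : Nat.card {v : ZMod m → ZMod ℓ // ∀ i, (s : ZMod ℓ) * v (i + j) = v i}
      = if s ^ t = 1 then ℓ ^ (Nat.gcd j.val m) else 1 := by
    rw [Nat.card_congr (Equiv.subtypeEquivRight hQ), count_aux ℓ m hℓ hm j s⁻¹]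
    simp only [inv_pow, inv_eq_one, ← htdef]
  have h0 : ∀ i, (s : ZMod ℓ) * (0 : ZMod m → ZMod ℓ) (i + j) = (0 : ZMod m → ZMod ℓ) i := by
    intro i; simp
  haveI : Fintype {v : ZMod m → ZMod ℓ // ∀ i, (s : ZMod ℓ) * v (i + j) = v i} :=
    Fintype.ofFinite _
  have e : {v : ZMod m → ZMod ℓ // v ≠ 0 ∧ ∀ i, (s : ZMod ℓ) * v (i + j) = v i}
      ≃ {x : {v : ZMod m → ZMod ℓ // ∀ i, (s : ZMod ℓ) * v (i + j) = v i} //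
          ¬ (x = ⟨0, h0⟩)} :=
    { toFun := fun v => ⟨⟨v.1, v.2.2⟩, fun h => v.2.1 (congrArg Subtype.val h)⟩
      invFun := fun x => ⟨x.1.1, fun h => x.2 (Subtype.ext h), x.1.2⟩
      left_inv := fun v => rfl
      right_inv := fun x => rfl }
  rw [Nat.card_congr e, Nat.card_eq_fintype_card, Fintype.card_subtype_compl,
    Fintype.card_subtype_eq, ← Nat.card_eq_fintype_card, hcard]
  have hdd : m / t = Nat.gcd j.val m :=
    Nat.div_div_self (Nat.gcd_dvd_right _ _) (Nat.one_le_iff_ne_zero.mp hm)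
  split_ifs <;> simp [hdd]
end

section
/- Let ℓ be an odd prime and m ≥ 1 with m ∣ ℓ − 1. Let the group ZMod m × (ZMod ℓ)ˣ act on the set X of nonzero vectors v : ZMod m → ZMod ℓ by (r, s)·v = s • (r • v), where (r • v)(i) = v(i + r). Then the number of orbits of this action equals (1 / ((ℓ − 1) · m)) · Σ_{r = 0}^{m − 1} (m / gcd(r, m)) · (ℓ^{gcd(r, m)} − 1). -/
open MulAction

namespace BurnsideAux5

variable (ℓ m : ℕ)

abbrev G := Multiplicative (ZMod m) × (ZMod ℓ)ˣ

instance : SMul (G ℓ m) (ZMod m → ZMod ℓ) :=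
  ⟨fun g v => fun i => (g.2 : ZMod ℓ) * v (i + Multiplicative.toAdd g.1)⟩

lemma smul_def (g : G ℓ m) (v : ZMod m → ZMod ℓ) :
    g • v = fun i => (g.2 : ZMod ℓ) * v (i + Multiplicative.toAdd g.1) := rfl

instance : MulAction (G ℓ m) (ZMod m → ZMod ℓ) where
  one_smul v := funext fun i => by simp [smul_def]
  mul_smul g h v := funext fun i => by
    simp [smul_def, mul_assoc, add_assoc]

lemma smul_ne_zero' (g : G ℓ m) {v : ZMod m → ZMod ℓ} (hv : v ≠ 0) : g • v ≠ 0 := by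
  intro h
  apply hv
  funext j
  have := congrFun h (j - Multiplicative.toAdd g.1)
  simp only [smul_def, sub_add_cancel, Pi.zero_apply] at this
  simpa [Units.mul_right_eq_zero] using this

abbrev X := {v : ZMod m → ZMod ℓ // v ≠ 0}

instance : MulAction (G ℓ m) (X ℓ m) where
  smul g v := ⟨g • v.1, smul_ne_zero' ℓ m g v.2⟩
  one_smul v := Subtype.ext (one_smul _ v.1)
  mul_smul g h v := Subtype.ext (mul_smul g h v.1)

variable {ℓ m}

lemma iterate_lemma {r : ZMod m} {s : (ZMod ℓ)ˣ} {v : ZMod m → ZMod ℓ}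
    (hv : ∀ i, (s : ZMod ℓ) * v (i + r) = v i) (n : ℤ) (i : ZMod m) :
    v i = ((s ^ n : (ZMod ℓ)ˣ) : ZMod ℓ) * v (i + n • r) := by
  induction n using Int.induction_on with
  | zero => simp
  | succ n ih =>
      have h1 := hv (i + (n : ℤ) • r)
      rw [show i + (n:ℤ) • r + r = i + ((n:ℤ)+1) • r by rw [add_zsmul, one_zsmul, add_assoc]] at h1
      rw [ih, ← h1, zpow_add_one]
      push_cast
      ring
  | pred n ih =>
      have h1 := hv (i + (-(n:ℤ) - 1) • r)
      rw [show i + (-(n:ℤ)-1) • r + r = i + (-(n:ℤ)) • r by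
        rw [sub_zsmul, one_zsmul, add_assoc, neg_add_cancel_right]] at h1
      rw [ih, ← h1, show (-(n:ℤ) - 1) = -(n:ℤ) + -1 by ring, zpow_add, zpow_neg_one]
      push_cast
      linear_combination (-(((s ^ (-(n:ℤ)) : (ZMod ℓ)ˣ) : ZMod ℓ)) * v (i + -(n:ℤ) • r)) * (Units.mul_inv s)

lemma card_fixed_pos [NeZero m] [NeZero ℓ] {r : ZMod m} {s : (ZMod ℓ)ˣ}
    (hs : s ^ addOrderOf r = 1) :
    Nat.card {v : ZMod m → ZMod ℓ // v ≠ 0 ∧ ∀ i, (s : ZMod ℓ) * v (i + r) = v i}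
      = ℓ ^ (m / addOrderOf r) - 1 := by
  classical
  set Q := ZMod m ⧸ AddSubgroup.zmultiples r with hQ
  have hw : ∀ i : ZMod m, ∃ n : ℤ, n • r = i - ((i : Q)).out := by
    intro i
    have h : (i : Q) = (((i : Q).out : ZMod m) : Q) := (QuotientAddGroup.out_eq' _).symm
    rw [QuotientAddGroup.eq] at h
    obtain ⟨n, hn⟩ := AddSubgroup.mem_zmultiples_iff.mp h
    exact ⟨-n, by rw [neg_zsmul, hn]; abel⟩
  set w : ZMod m → ℤ := fun i => (hw i).choose with hwdef
  have hwr : ∀ i, (w i) • r = i - ((i : Q)).out := fun i => (hw i).choose_spec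
  have hsd : ∀ n : ℤ, n • r = 0 → s ^ n = 1 := by
    intro n hn
    obtain ⟨t, ht⟩ := addOrderOf_dvd_iff_zsmul_eq_zero.mpr hn
    rw [ht, zpow_mul, zpow_natCast, hs, one_zpow]
  set E : ZMod m → (ZMod ℓ)ˣ := fun i => (s ^ (w i))⁻¹ with hEdef
  have hπ : ∀ i : ZMod m, ((i + r : ZMod m) : Q) = (i : Q) := by
    intro i
    rw [QuotientAddGroup.eq]
    exact AddSubgroup.mem_zmultiples_iff.mpr ⟨-1, by rw [neg_zsmul, one_zsmul]; abel⟩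
  have hE3 : ∀ i, s * E (i + r) = E i := by
    intro i
    have h0 : (w (i + r) - (w i + 1)) • r = 0 := by
      rw [sub_zsmul, add_zsmul, one_zsmul, hwr, hwr, hπ]; abel
    have h2 : s ^ (w (i + r)) = s ^ (w i + 1) := by
      have h1 := hsd _ h0
      rwa [zpow_sub, mul_inv_eq_one] at h1
    simp only [hEdef]
    rw [h2, zpow_add_one, mul_inv_rev, ← mul_assoc, mul_inv_cancel, one_mul]
  have hE2 : ∀ q : Q, E q.out = 1 := by
    intro q
    have h0 : (w (q.out)) • r = 0 := by
      rw [hwr, QuotientAddGroup.out_eq', sub_self]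
    simp only [hEdef, hsd _ h0, inv_one]
  have hrepr : ∀ (v : ZMod m → ZMod ℓ), (∀ i, (s : ZMod ℓ) * v (i + r) = v i) →
      ∀ i, v i = (E i : ZMod ℓ) * v (((i : Q)).out) := by
    intro v hv i
    have h := iterate_lemma hv (-(w i)) i
    rw [neg_zsmul, hwr, show i + -(i - ((i:Q)).out) = ((i:Q)).out by abel, zpow_neg] at h
    exact h
  have e : {v : ZMod m → ZMod ℓ // v ≠ 0 ∧ ∀ i, (s : ZMod ℓ) * v (i + r) = v i}
      ≃ {f : Q → ZMod ℓ // f ≠ 0} := by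
    refine ⟨fun v => ⟨fun q => v.1 q.out, ?_⟩, fun f => ⟨fun i => (E i : ZMod ℓ) * f.1 (i : Q), ?_, ?_⟩, ?_, ?_⟩
    · intro h0
      apply v.2.1
      funext i
      rw [hrepr v.1 v.2.2 i]
      have := congrFun h0 ((i : Q))
      simp only [Pi.zero_apply] at this
      rw [this, mul_zero]
      rfl
    · intro h0
      obtain ⟨q, hq⟩ := Function.ne_iff.mp f.2
      apply hq
      have := congrFun h0 q.out
      simp only [Pi.zero_apply, QuotientAddGroup.out_eq'] at this
      exact (Units.mul_right_eq_zero _).mp this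
    · intro i
      dsimp only
      rw [hπ, ← mul_assoc]
      congr 1
      rw [← Units.val_mul, hE3]
    · intro v
      apply Subtype.ext
      funext i
      exact (hrepr v.1 v.2.2 i).symm
    · intro f
      apply Subtype.ext
      funext q
      simp only [QuotientAddGroup.out_eq', hE2 q, Units.val_one, one_mul]
  rw [Nat.card_congr e]
  haveI : Fintype Q := Fintype.ofFinite _
  haveI : DecidableEq Q := Classical.decEq _
  have hcardQ : Fintype.card Q = m / addOrderOf r := by
    have h1 : Nat.card (ZMod m) = Nat.card Q * Nat.card (AddSubgroup.zmultiples r) :=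
      AddSubgroup.card_eq_card_quotient_mul_card_addSubgroup _
    rw [Nat.card_zmod, Nat.card_zmultiples] at h1
    have hpos : 0 < addOrderOf r := addOrderOf_pos r
    rw [← Nat.card_eq_fintype_card]
    exact (Nat.div_eq_of_eq_mul_left hpos h1).symm
  rw [Nat.card_eq_fintype_card]
  rw [Fintype.card_subtype_compl (p := fun f : Q → ZMod ℓ => f = 0)]
  rw [Fintype.card_subtype_eq (0 : Q → ZMod ℓ), Fintype.card_fun, ZMod.card, hcardQ]

lemma card_fixed_zero [NeZero m] [Fact ℓ.Prime] {r : ZMod m} {s : (ZMod ℓ)ˣ}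
    (hs : s ^ addOrderOf r ≠ 1) :
    Nat.card {v : ZMod m → ZMod ℓ // v ≠ 0 ∧ ∀ i, (s : ZMod ℓ) * v (i + r) = v i} = 0 := by
  rw [Nat.card_eq_zero]
  left
  rw [isEmpty_subtype]
  rintro v ⟨hv0, hv⟩
  apply hs
  obtain ⟨i, hi⟩ := Function.ne_iff.mp hv0
  simp only [Pi.zero_apply] at hi
  have h := iterate_lemma hv (addOrderOf r : ℤ) i
  rw [natCast_zsmul, addOrderOf_nsmul_eq_zero, add_zero, zpow_natCast] at h
  have h1 : (((s ^ addOrderOf r : (ZMod ℓ)ˣ) : ZMod ℓ) - 1) * v i = 0 := by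
    linear_combination -h
  have : ((s ^ addOrderOf r : (ZMod ℓ)ˣ) : ZMod ℓ) = 1 := by
    rcases mul_eq_zero.mp h1 with h2 | h2
    · exact sub_eq_zero.mp h2
    · exact absurd h2 hi
  ext
  simpa using this

lemma card_units_pow_eq_one [Fact ℓ.Prime] {k : ℕ} (hk : 0 < k) (hdvd : k ∣ ℓ - 1) :
    Nat.card {s : (ZMod ℓ)ˣ // s ^ k = 1} = k := by
  classical
  rw [Nat.card_eq_fintype_card, Fintype.card_subtype]
  have hcard : Fintype.card (ZMod ℓ)ˣ = ℓ - 1 := ZMod.card_units ℓ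
  obtain ⟨g, hg⟩ := IsCyclic.exists_generator (α := (ZMod ℓ)ˣ)
  have horder : orderOf g = ℓ - 1 := by
    rw [orderOf_eq_card_of_forall_mem_zpowers hg, Nat.card_eq_fintype_card, hcard]
  obtain ⟨c, hc⟩ := hdvd
  have h2 := (Fact.out : ℓ.Prime).two_le
  have hc0 : 0 < c := by
    rcases Nat.eq_zero_or_pos c with h | h
    · subst h; simp at hc; omega
    · exact h
  have horda : orderOf (g ^ c) = k := by
    rw [orderOf_pow, horder, hc, Nat.gcd_eq_right (dvd_mul_left c k), Nat.mul_div_cancel _ hc0]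
  apply le_antisymm
  · exact IsCyclic.card_pow_eq_one_le hk
  · have h3 : k = Fintype.card (Subgroup.zpowers (g ^ c)) := by
      rw [Fintype.card_zpowers, horda]
    have h4 : (Finset.univ : Finset ↥(Subgroup.zpowers (g ^ c))).card
        ≤ (Finset.filter (fun x : (ZMod ℓ)ˣ => x ^ k = 1) Finset.univ).card := by
      refine Finset.card_le_card_of_injOn (fun x => (x : (ZMod ℓ)ˣ)) ?_ ?_
      · rintro ⟨x, hx⟩ _
        simp only [Finset.mem_coe, Finset.mem_filter, Finset.mem_univ, true_and]
        obtain ⟨n, hn⟩ := Subgroup.mem_zpowers_iff.mp hx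
        rw [← hn, ← zpow_natCast, ← zpow_mul, mul_comm, zpow_mul, zpow_natCast, ← horda,
          pow_orderOf_eq_one, one_zpow]
      · intro x _ y _ h
        exact Subtype.ext h
    calc k = Fintype.card ↥(Subgroup.zpowers (g ^ c)) := h3
      _ = (Finset.univ : Finset ↥(Subgroup.zpowers (g ^ c))).card := Finset.card_univ.symm
      _ ≤ _ := h4

variable (ℓ m)

lemma orbit_eq [NeZero m] (v : X ℓ m) :
    {w | ∃ (r : ZMod m) (s : (ZMod ℓ)ˣ), w = fun i => (s : ZMod ℓ) * v.1 (i + r)}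
      = Subtype.val '' (orbit (G ℓ m) v) := by
  ext w
  constructor
  · rintro ⟨r, s, rfl⟩
    exact ⟨(Multiplicative.ofAdd r, s) • v, MulAction.mem_orbit _ _, rfl⟩
  · rintro ⟨x, ⟨g, rfl⟩, rfl⟩
    exact ⟨Multiplicative.toAdd g.1, g.2, rfl⟩

lemma card_orbit_set [NeZero m] :
    Nat.card {o : Set (ZMod m → ZMod ℓ) | ∃ v : ZMod m → ZMod ℓ, v ≠ 0 ∧
        o = {w | ∃ (r : ZMod m) (s : (ZMod ℓ)ˣ),
          w = fun i => (s : ZMod ℓ) * v (i + r)}}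
      = Nat.card (Quotient (orbitRel (G ℓ m) (X ℓ m))) := by
  refine (Nat.card_congr (Equiv.ofBijective ?_ ⟨?_, ?_⟩)).symm
  · refine Quotient.lift (fun v : X ℓ m =>
      (⟨Subtype.val '' orbit (G ℓ m) v, v.1, v.2, (orbit_eq ℓ m v).symm⟩ :
        {o : Set (ZMod m → ZMod ℓ) // o ∈ {o | ∃ v : ZMod m → ZMod ℓ, v ≠ 0 ∧
          o = {w | ∃ (r : ZMod m) (s : (ZMod ℓ)ˣ), w = fun i => (s : ZMod ℓ) * v (i + r)}}})) ?_
    intro a b hab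
    exact Subtype.ext (congrArg (Set.image Subtype.val) (orbit_eq_iff.mpr (orbitRel_apply.mp hab)))
  · intro q1 q2
    refine Quotient.inductionOn₂ q1 q2 fun a b h => ?_
    have h1 : Subtype.val '' orbit (G ℓ m) a = Subtype.val '' orbit (G ℓ m) b :=
      congrArg Subtype.val h
    have h2 : orbit (G ℓ m) a = orbit (G ℓ m) b :=
      Set.image_injective.mpr Subtype.val_injective h1
    exact Quotient.sound' (orbitRel_apply.mpr (orbit_eq_iff.mp h2))
  · rintro ⟨o, v0, hv0, rfl⟩
    exact ⟨Quotient.mk'' ⟨v0, hv0⟩, Subtype.ext (orbit_eq ℓ m ⟨v0, hv0⟩).symm⟩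

lemma card_fixedBy_eq (r : ZMod m) (s : (ZMod ℓ)ˣ) :
    Nat.card (fixedBy (X ℓ m) ((Multiplicative.ofAdd r, s) : G ℓ m))
      = Nat.card {v : ZMod m → ZMod ℓ // v ≠ 0 ∧ ∀ i, (s : ZMod ℓ) * v (i + r) = v i} := by
  apply Nat.card_congr
  refine ⟨fun x => ⟨x.1.1, x.1.2, fun i => ?_⟩, fun y => ⟨⟨y.1, y.2.1⟩, ?_⟩,
    fun x => Subtype.ext (Subtype.ext rfl), fun y => Subtype.ext rfl⟩
  · exact congrFun (congrArg Subtype.val x.2) i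
  · apply Subtype.ext
    funext i
    exact y.2.2 i

end BurnsideAux5

open BurnsideAux5 MulAction in
theorem burnside_orbit_count_Cl_wr_Cm (ℓ m : ℕ) (hℓ : ℓ.Prime) (hodd : Odd ℓ)
    (hm : 1 ≤ m) (hdvd : m ∣ ℓ - 1) :
    (Nat.card ↥{o : Set (ZMod m → ZMod ℓ) | ∃ v : ZMod m → ZMod ℓ, v ≠ 0 ∧
        o = {w | ∃ (r : ZMod m) (s : (ZMod ℓ)ˣ),
          w = fun i => (s : ZMod ℓ) * v (i + r)}} : ℚ)
      = (1 / (((ℓ : ℚ) - 1) * (m : ℚ))) *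
          ∑ r ∈ Finset.range m,
            ((m / Nat.gcd r m : ℕ) : ℚ) * ((ℓ : ℚ) ^ (Nat.gcd r m) - 1) := by
  classical
  haveI : NeZero m := ⟨by omega⟩
  haveI : Fact ℓ.Prime := ⟨hℓ⟩
  haveI : NeZero ℓ := ⟨hℓ.ne_zero⟩
  haveI : Fintype (X ℓ m) := Fintype.ofFinite _
  haveI : ∀ g : G ℓ m, Fintype (fixedBy (X ℓ m) g) := fun g => Fintype.ofFinite _
  haveI : Fintype (Quotient (orbitRel (G ℓ m) (X ℓ m))) := Fintype.ofFinite _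
  -- Burnside
  have burn := MulAction.sum_card_fixedBy_eq_card_orbits_mul_card_group (G ℓ m) (X ℓ m)
  have hcardG : Fintype.card (G ℓ m) = m * (ℓ - 1) := by
    rw [Fintype.card_prod, Fintype.card_multiplicative, ZMod.card, ZMod.card_units]
  -- inner sums
  have hinner : ∀ r : ZMod m, (∑ s : (ZMod ℓ)ˣ,
      Nat.card {v : ZMod m → ZMod ℓ // v ≠ 0 ∧ ∀ i, (s : ZMod ℓ) * v (i + r) = v i})
      = addOrderOf r * (ℓ ^ (m / addOrderOf r) - 1) := by
    intro r
    have hkm : addOrderOf r ∣ m := by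
      have := addOrderOf_dvd_card (x := r)
      rwa [ZMod.card] at this
    have hkl : addOrderOf r ∣ ℓ - 1 := hkm.trans hdvd
    have hkpos : 0 < addOrderOf r := addOrderOf_pos r
    calc (∑ s : (ZMod ℓ)ˣ,
        Nat.card {v : ZMod m → ZMod ℓ // v ≠ 0 ∧ ∀ i, (s : ZMod ℓ) * v (i + r) = v i})
        = ∑ s : (ZMod ℓ)ˣ, if s ^ addOrderOf r = 1 then ℓ ^ (m / addOrderOf r) - 1 else 0 := by
          refine Finset.sum_congr rfl fun s _ => ?_
          by_cases hs : s ^ addOrderOf r = 1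
          · rw [if_pos hs, card_fixed_pos hs]
          · rw [if_neg hs, card_fixed_zero hs]
      _ = (Finset.filter (fun s : (ZMod ℓ)ˣ => s ^ addOrderOf r = 1) Finset.univ).card
            * (ℓ ^ (m / addOrderOf r) - 1) := by
          rw [← Finset.sum_filter, Finset.sum_const, smul_eq_mul]
      _ = addOrderOf r * (ℓ ^ (m / addOrderOf r) - 1) := by
          congr 1
          have := card_units_pow_eq_one (ℓ := ℓ) hkpos hkl
          rwa [Nat.card_eq_fintype_card, Fintype.card_subtype] at this
  -- total sum over the group
  have htot : (∑ g : G ℓ m, Fintype.card (fixedBy (X ℓ m) g))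
      = ∑ r : ZMod m, addOrderOf r * (ℓ ^ (m / addOrderOf r) - 1) := by
    have hre : (∑ a : Multiplicative (ZMod m), ∑ s : (ZMod ℓ)ˣ,
        Fintype.card (fixedBy (X ℓ m) (a, s)))
        = ∑ r : ZMod m, ∑ s : (ZMod ℓ)ˣ,
            Fintype.card (fixedBy (X ℓ m) (Multiplicative.ofAdd r, s)) :=
      (Fintype.sum_equiv (Multiplicative.ofAdd (α := ZMod m)) _ _ (fun r => rfl)).symm
    rw [Fintype.sum_prod_type, hre]
    refine Finset.sum_congr rfl fun r _ => ?_
    rw [← hinner r]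
    refine Finset.sum_congr rfl fun s _ => ?_
    rw [← Nat.card_eq_fintype_card, card_fixedBy_eq]
  -- reindex over range m
  have hswap : (∑ r : ZMod m, addOrderOf r * (ℓ ^ (m / addOrderOf r) - 1))
      = ∑ j ∈ Finset.range m, (m / Nat.gcd j m) * (ℓ ^ Nat.gcd j m - 1) := by
    refine Finset.sum_nbij' (fun r : ZMod m => r.val) (fun j => (j : ZMod m))
      ?_ ?_ ?_ ?_ ?_
    · intro a _; exact Finset.mem_range.mpr (ZMod.val_lt a)
    · intros; exact Finset.mem_univ _
    · intro a _; exact ZMod.natCast_rightInverse a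
    · intro j hj; exact ZMod.val_cast_of_lt (Finset.mem_range.mp hj)
    · intro a _
      conv_lhs => rw [← ZMod.natCast_rightInverse a]
      rw [ZMod.addOrderOf_coe a.val (NeZero.ne m), Nat.gcd_comm m a.val,
        Nat.div_div_self (Nat.gcd_dvd_right a.val m) (NeZero.ne m)]
  -- assemble the natural-number identity
  rw [card_orbit_set ℓ m, Nat.card_eq_fintype_card]
  have key : (∑ j ∈ Finset.range m, (m / Nat.gcd j m) * (ℓ ^ Nat.gcd j m - 1))
      = Fintype.card (Quotient (orbitRel (G ℓ m) (X ℓ m))) * (m * (ℓ - 1)) := by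
    rw [← hswap, ← htot, burn, hcardG]
  -- cast to ℚ
  have hcast : ((∑ j ∈ Finset.range m, (m / Nat.gcd j m) * (ℓ ^ Nat.gcd j m - 1) : ℕ) : ℚ)
      = ∑ j ∈ Finset.range m, ((m / Nat.gcd j m : ℕ) : ℚ) * ((ℓ : ℚ) ^ Nat.gcd j m - 1) := by
    rw [Nat.cast_sum]
    refine Finset.sum_congr rfl fun j _ => ?_
    rw [Nat.cast_mul, Nat.cast_sub (Nat.one_le_pow _ _ hℓ.pos), Nat.cast_pow, Nat.cast_one]
  have keyQ : (∑ j ∈ Finset.range m, ((m / Nat.gcd j m : ℕ) : ℚ) * ((ℓ : ℚ) ^ Nat.gcd j m - 1))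
      = (Fintype.card (Quotient (orbitRel (G ℓ m) (X ℓ m))) : ℚ) * (m * ((ℓ : ℚ) - 1)) := by
    rw [← hcast, key]
    push_cast [Nat.cast_sub hℓ.one_lt.le]
    ring
  rw [keyQ]
  have hl2 : (2 : ℕ) ≤ ℓ := hℓ.two_le
  have h1 : ((ℓ : ℚ) - 1) ≠ 0 := by
    have : (2 : ℚ) ≤ (ℓ : ℚ) := by exact_mod_cast hl2
    linarith
  have h2 : (m : ℚ) ≠ 0 := by
    have : (1 : ℚ) ≤ (m : ℚ) := by exact_mod_cast hm
    linarith
  rw [one_div, inv_mul_eq_div, eq_div_iff (mul_ne_zero h1 h2)]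
  ring
end

section
/- Let ℓ be an odd prime. For r ∈ ZMod ℓ and s ∈ (ZMod ℓ²)ˣ, let F(r, s) be the number of nonzero vectors v : ZMod ℓ → ZMod ℓ² with s • (r • v) = v, where (r • v)(i) = v(i + r). Then: F(0, 1) = ℓ^{2ℓ} − 1; F(0, s) = ℓ^{ℓ} − 1 if s ≠ 1 and s ≡ 1 (mod ℓ); F(r, s) = ℓ² − 1 if r ≠ 0 and s ≡ 1 (mod ℓ); and F(r, s) = 0 in all remaining cases (i.e. whenever s ≢ 1 mod ℓ). -/
section Aux

/-- In `ZMod ℓ²`, reduction mod ℓ is zero iff `ℓ ∣ x.val`. -/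
lemma castA {ℓ : ℕ} (hℓ : ℓ.Prime) (x : ZMod (ℓ ^ 2)) :
    ZMod.castHom (dvd_pow_self ℓ two_ne_zero) (ZMod ℓ) x = 0 ↔ ℓ ∣ x.val := by
  haveI : Fact ℓ.Prime := ⟨hℓ⟩
  haveI : NeZero (ℓ ^ 2) := ⟨pow_ne_zero 2 hℓ.ne_zero⟩
  rw [ZMod.castHom_apply, ← ZMod.natCast_val, ZMod.natCast_eq_zero_iff]

lemma unitB {ℓ : ℕ} (hℓ : ℓ.Prime) (x : ZMod (ℓ ^ 2)) (h : ¬ ℓ ∣ x.val) : IsUnit x := by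
  haveI : NeZero (ℓ ^ 2) := ⟨pow_ne_zero 2 hℓ.ne_zero⟩
  have : IsUnit ((x.val : ℕ) : ZMod (ℓ ^ 2)) := by
    rw [ZMod.isUnit_iff_coprime]
    exact Nat.Coprime.pow_right 2 ((Nat.Prime.coprime_iff_not_dvd hℓ).mpr h).symm
  rwa [ZMod.natCast_val, ZMod.cast_id] at this

lemma divell {ℓ : ℕ} (hℓ : ℓ.Prime) (x : ZMod (ℓ ^ 2)) (h : ℓ ∣ x.val) :
    x = (ℓ : ZMod (ℓ ^ 2)) * ((x.val / ℓ : ℕ) : ZMod (ℓ ^ 2)) := by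
  haveI : NeZero (ℓ ^ 2) := ⟨pow_ne_zero 2 hℓ.ne_zero⟩
  conv_lhs => rw [show x = ((x.val : ℕ) : ZMod (ℓ ^ 2)) from ((ZMod.natCast_val x).trans (ZMod.cast_id _ _)).symm]
  rw [← Nat.cast_mul, Nat.mul_div_cancel' h]

lemma mulell {ℓ : ℕ} (hℓ : ℓ.Prime) (x : ZMod (ℓ ^ 2)) (h : ℓ ∣ x.val) :
    (ℓ : ZMod (ℓ ^ 2)) * x = 0 := by
  rw [divell hℓ x h, ← mul_assoc, ← Nat.cast_mul, ← sq, ZMod.natCast_self, zero_mul]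

lemma sqzero {ℓ : ℕ} (hℓ : ℓ.Prime) (x : ZMod (ℓ ^ 2)) (h : ℓ ∣ x.val) : x * x = 0 := by
  have hz : (ℓ : ZMod (ℓ ^ 2)) * (ℓ : ZMod (ℓ ^ 2)) = 0 := by
    rw [← Nat.cast_mul, ← sq, ZMod.natCast_self]
  rw [divell hℓ x h, mul_mul_mul_comm, hz, zero_mul]

/-- `(1 + x)^n = 1 + n x` when `x² = 0`. -/
lemma one_add_pow {R : Type*} [CommRing R] (x : R) (hx : x * x = 0) (n : ℕ) :
    (1 + x) ^ n = 1 + (n : R) * x := by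
  induction n with
  | zero => simp
  | succ n ih =>
    rw [pow_succ, ih]
    have : (1 + (n : R) * x) * (1 + x) = 1 + ((n : R) + 1) * x + (n : R) * (x * x) := by ring
    rw [this, hx, mul_zero, add_zero]
    push_cast
    ring

end Aux

section Aux2

lemma spow {ℓ : ℕ} (hℓ : ℓ.Prime) (s : (ZMod (ℓ ^ 2))ˣ)
    (hs : ZMod.castHom (dvd_pow_self ℓ two_ne_zero) (ZMod ℓ) (s : ZMod (ℓ ^ 2)) = 1) :
    s ^ ℓ = 1 := by
  have hx : ℓ ∣ ((s : ZMod (ℓ ^ 2)) - 1).val := by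
    rw [← castA hℓ, map_sub, map_one, hs, sub_self]
  have h1 : ((s : ZMod (ℓ ^ 2))) ^ ℓ = 1 := by
    have := one_add_pow ((s : ZMod (ℓ ^ 2)) - 1) (sqzero hℓ _ hx) ℓ
    rw [add_sub_cancel] at this
    rw [this, mulell hℓ _ hx, add_zero]
  ext
  rw [Units.val_pow_eq_pow_val, h1, Units.val_one]

/-- Recursion formula: any solution satisfies `s^m * v (m*r) = v 0`. -/
lemma recform {ℓ : ℕ} (r : ZMod ℓ) (s : (ZMod (ℓ ^ 2))ˣ)
    (v : ZMod ℓ → ZMod (ℓ ^ 2)) (hv : ∀ i, (s : ZMod (ℓ ^ 2)) * v (i + r) = v i)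
    (m : ℕ) : ((s ^ m : (ZMod (ℓ ^ 2))ˣ) : ZMod (ℓ ^ 2)) * v ((m : ZMod ℓ) * r) = v 0 := by
  induction m with
  | zero => simp
  | succ m ih =>
    have : ((m + 1 : ℕ) : ZMod ℓ) * r = (m : ZMod ℓ) * r + r := by push_cast; ring
    have h2 : ((s ^ (m + 1) : (ZMod (ℓ ^ 2))ˣ) : ZMod (ℓ ^ 2)) =
        ((s ^ m : (ZMod (ℓ ^ 2))ˣ) : ZMod (ℓ ^ 2)) * s := by
      rw [Units.val_pow_eq_pow_val, Units.val_pow_eq_pow_val]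
      exact pow_succ _ m
    rw [this, h2, mul_assoc, hv, ih]

/-- Hence `v i = (s^m)⁻¹ * v 0` with `m = (i * r⁻¹).val`, for `r ≠ 0`. -/
lemma solform {ℓ : ℕ} (hℓ : ℓ.Prime) (r : ZMod ℓ) (hr : r ≠ 0) (s : (ZMod (ℓ ^ 2))ˣ)
    (v : ZMod ℓ → ZMod (ℓ ^ 2)) (hv : ∀ i, (s : ZMod (ℓ ^ 2)) * v (i + r) = v i)
    (i : ZMod ℓ) :
    v i = ((((s ^ (i * r⁻¹).val)⁻¹ : (ZMod (ℓ ^ 2))ˣ)) : ZMod (ℓ ^ 2)) * v 0 := by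
  haveI : Fact ℓ.Prime := ⟨hℓ⟩
  have hm : (((i * r⁻¹).val : ℕ) : ZMod ℓ) * r = i := by
    rw [ZMod.natCast_val, ZMod.cast_id, mul_assoc, inv_mul_cancel₀ hr, mul_one]
  have := recform r s v hv (i * r⁻¹).val
  rw [hm] at this
  rw [← this, ← mul_assoc, ← Units.val_mul, inv_mul_cancel, Units.val_one, one_mul]

end Aux2

section Aux3

lemma mulell_iff {ℓ : ℕ} (hℓ : ℓ.Prime) (x : ZMod (ℓ ^ 2)) :
    (ℓ : ZMod (ℓ ^ 2)) * x = 0 ↔ ℓ ∣ x.val := by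
  haveI : NeZero (ℓ ^ 2) := ⟨pow_ne_zero 2 hℓ.ne_zero⟩
  constructor
  · intro h
    have h1 : (ℓ : ZMod (ℓ ^ 2)) * x = ((ℓ * x.val : ℕ) : ZMod (ℓ ^ 2)) := by
      rw [Nat.cast_mul, ZMod.natCast_val, ZMod.cast_id]
    rw [h1, ZMod.natCast_eq_zero_iff] at h
    obtain ⟨k, hk⟩ := h
    exact ⟨k, Nat.eq_of_mul_eq_mul_left hℓ.pos (by rw [hk]; ring)⟩
  · exact mulell hℓ x

/-- Removing the zero vector. -/
lemma card_nonzero {α : Type*} [Finite α] [Zero α] (P : α → Prop) (h0 : P 0) :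
    Nat.card {v : α // v ≠ 0 ∧ P v} = Nat.card {v : α // P v} - 1 := by
  have hset : {v : α | v ≠ 0 ∧ P v} = {v : α | P v} \ {0} := by
    ext v; simp [and_comm]
  calc Nat.card {v : α // v ≠ 0 ∧ P v} = ({v : α | P v} \ {0}).ncard := by
        rw [← hset, ← Nat.card_coe_set_eq]; rfl
    _ = {v : α | P v}.ncard - 1 := Set.ncard_diff_singleton_of_mem h0
    _ = Nat.card {v : α // P v} - 1 := by rw [← Nat.card_coe_set_eq]; rfl

end Aux3

section Main

variable {ℓ : ℕ}

/-- Case 3 equivalence: for `r ≠ 0` with `s^ℓ = 1`, solutions biject with `ZMod ℓ²`. -/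
lemma case3card (hℓ : ℓ.Prime) (r : ZMod ℓ) (hr : r ≠ 0) (s : (ZMod (ℓ ^ 2))ˣ)
    (hsl : s ^ ℓ = 1) :
    Nat.card {v : ZMod ℓ → ZMod (ℓ ^ 2) //
      ∀ i, (s : ZMod (ℓ ^ 2)) * v (i + r) = v i} = ℓ ^ 2 := by
  haveI : Fact ℓ.Prime := ⟨hℓ⟩
  have key : ∀ i : ZMod ℓ, s * (s ^ (((i + r) * r⁻¹).val))⁻¹ = (s ^ ((i * r⁻¹).val))⁻¹ := by
    intro i
    have ha : (i + r) * r⁻¹ = i * r⁻¹ + 1 := by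
      rw [add_mul, mul_inv_cancel₀ hr]
    set a := i * r⁻¹ with ha'
    have hval : (a + 1).val = (a.val + 1) % ℓ := by
      rw [ZMod.val_add, ZMod.val_one]
    have hmod : a.val + 1 ≡ (a + 1).val [MOD orderOf s] :=
      Nat.ModEq.of_dvd (orderOf_dvd_of_pow_eq_one hsl)
        (by rw [hval]; exact (Nat.mod_modEq _ _).symm)
    have hpow : s ^ ((a + 1).val) = s ^ (a.val) * s := by
      rw [← pow_eq_pow_iff_modEq.mpr hmod]
      exact pow_succ s a.val
    rw [ha, hpow, mul_inv_rev, ← mul_assoc, mul_inv_cancel, one_mul]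
  have e : {v : ZMod ℓ → ZMod (ℓ ^ 2) // ∀ i, (s : ZMod (ℓ ^ 2)) * v (i + r) = v i}
      ≃ ZMod (ℓ ^ 2) :=
    { toFun := fun v => v.1 0
      invFun := fun x => ⟨fun i => (((s ^ ((i * r⁻¹).val))⁻¹ : (ZMod (ℓ ^ 2))ˣ) : ZMod (ℓ ^ 2)) * x,
        fun i => by rw [← mul_assoc, ← Units.val_mul, key i]⟩
      left_inv := fun v => Subtype.ext (funext fun i => (solform hℓ r hr s v.1 v.2 i).symm)
      right_inv := fun x => by simp }
  rw [Nat.card_congr e, Nat.card_zmod]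

/-- Case 2 card. -/
lemma case2card (hℓ : ℓ.Prime) :
    Nat.card {v : ZMod ℓ → ZMod (ℓ ^ 2) // ∀ i, ℓ ∣ (v i).val} = ℓ ^ ℓ := by
  haveI : Fact ℓ.Prime := ⟨hℓ⟩
  haveI : NeZero (ℓ ^ 2) := ⟨pow_ne_zero 2 hℓ.ne_zero⟩
  set Φ : (ZMod ℓ → ZMod (ℓ ^ 2)) →+ (ZMod ℓ → ZMod ℓ) :=
    AddMonoidHom.compLeft
      (ZMod.castHom (dvd_pow_self ℓ two_ne_zero) (ZMod ℓ)).toAddMonoidHom (ZMod ℓ) with hΦ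
  have hmem : ∀ v : ZMod ℓ → ZMod (ℓ ^ 2), (∀ i, ℓ ∣ (v i).val) ↔ v ∈ Φ.ker := by
    intro v
    rw [AddMonoidHom.mem_ker, funext_iff]
    refine forall_congr' fun i => Iff.trans ?_ (Iff.rfl)
    exact (castA hℓ (v i)).symm
  have hsurj : Function.Surjective Φ := by
    intro w
    refine ⟨fun i => (((w i).val : ℕ) : ZMod (ℓ ^ 2)), funext fun i => ?_⟩
    show ZMod.castHom (dvd_pow_self ℓ two_ne_zero) (ZMod ℓ) (((w i).val : ℕ) : ZMod (ℓ ^ 2)) = w i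
    rw [map_natCast, ZMod.natCast_val, ZMod.cast_id]
  have hcard : Nat.card (ZMod ℓ → ZMod (ℓ ^ 2)) =
      Nat.card (ZMod ℓ → ZMod ℓ) * Nat.card Φ.ker := by
    rw [AddSubgroup.card_eq_card_quotient_mul_card_addSubgroup Φ.ker,
      Nat.card_congr (QuotientAddGroup.quotientKerEquivOfSurjective Φ hsurj).toEquiv]
  rw [Nat.card_fun, Nat.card_fun, Nat.card_zmod, Nat.card_zmod] at hcard
  have hne : ℓ ^ ℓ ≠ 0 := pow_ne_zero ℓ hℓ.ne_zero
  have h2 : (ℓ ^ 2) ^ ℓ = ℓ ^ ℓ * ℓ ^ ℓ := by rw [← pow_mul, two_mul, pow_add]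
  rw [Nat.card_congr (Equiv.subtypeEquivRight hmem)]
  have : ℓ ^ ℓ * ℓ ^ ℓ = ℓ ^ ℓ * Nat.card Φ.ker := by rw [← h2, hcard]
  exact (Nat.eq_of_mul_eq_mul_left (Nat.pos_of_ne_zero hne) this).symm

end Main

/-- `F(r, s)`: the number of nonzero vectors `v : ZMod ℓ → ZMod ℓ²` with
`s • (r • v) = v`, i.e. `s * v (i + r) = v i` for all `i`. -/
noncomputable def Fcount (ℓ : ℕ) (r : ZMod ℓ) (s : (ZMod (ℓ ^ 2))ˣ) : ℕ :=
  Nat.card {v : ZMod ℓ → ZMod (ℓ ^ 2) // v ≠ 0 ∧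
    ∀ i, (s : ZMod (ℓ ^ 2)) * v (i + r) = v i}

theorem fixed_vector_counts_Cl2_wr_Cl (ℓ : ℕ) (hℓ : ℓ.Prime) (hodd : Odd ℓ) :
    Fcount ℓ 0 1 = ℓ ^ (2 * ℓ) - 1 ∧
    (∀ s : (ZMod (ℓ ^ 2))ˣ, s ≠ 1 →
      ZMod.castHom (dvd_pow_self ℓ two_ne_zero) (ZMod ℓ) (s : ZMod (ℓ ^ 2)) = 1 →
      Fcount ℓ 0 s = ℓ ^ ℓ - 1) ∧
    (∀ (r : ZMod ℓ) (s : (ZMod (ℓ ^ 2))ˣ), r ≠ 0 →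
      ZMod.castHom (dvd_pow_self ℓ two_ne_zero) (ZMod ℓ) (s : ZMod (ℓ ^ 2)) = 1 →
      Fcount ℓ r s = ℓ ^ 2 - 1) ∧
    (∀ (r : ZMod ℓ) (s : (ZMod (ℓ ^ 2))ˣ),
      ZMod.castHom (dvd_pow_self ℓ two_ne_zero) (ZMod ℓ) (s : ZMod (ℓ ^ 2)) ≠ 1 →
      Fcount ℓ r s = 0) := by
  haveI : Fact ℓ.Prime := ⟨hℓ⟩
  haveI : NeZero (ℓ ^ 2) := ⟨pow_ne_zero 2 hℓ.ne_zero⟩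
  haveI : Fact (1 < ℓ) := ⟨hℓ.one_lt⟩
  refine ⟨?_, ?_, ?_, ?_⟩
  · -- case 1 : r = 0, s = 1
    rw [Fcount, card_nonzero _ (fun i => by simp)]
    congr 1
    rw [Nat.card_congr (Equiv.subtypeUnivEquiv (fun v i => by simp)),
      Nat.card_fun, Nat.card_zmod, Nat.card_zmod, ← pow_mul]
  · -- case 2 : r = 0, s ≠ 1, s ≡ 1 mod ℓ
    intro s hs1 hs
    have hdvd : ℓ ∣ ((s : ZMod (ℓ ^ 2)) - 1).val := by
      rw [← castA hℓ, map_sub, map_one, hs, sub_self]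
    set c : ZMod (ℓ ^ 2) := (((((s : ZMod (ℓ ^ 2)) - 1).val / ℓ : ℕ)) : ZMod (ℓ ^ 2)) with hcdef
    have hc : (s : ZMod (ℓ ^ 2)) - 1 = (ℓ : ZMod (ℓ ^ 2)) * c := divell hℓ _ hdvd
    have hne : (s : ZMod (ℓ ^ 2)) - 1 ≠ 0 := by
      intro h
      exact hs1 (Units.val_eq_one.mp (by linear_combination (h : _)))
    have hvlt : ((s : ZMod (ℓ ^ 2)) - 1).val / ℓ < ℓ := by
      have h2 : ((s : ZMod (ℓ ^ 2)) - 1).val < ℓ * ℓ := by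
        rw [← sq]; exact ZMod.val_lt _
      exact Nat.div_lt_of_lt_mul h2
    have hvne : ((s : ZMod (ℓ ^ 2)) - 1).val / ℓ ≠ 0 := by
      intro h
      apply hne
      obtain ⟨k, hk⟩ := hdvd
      rw [hk, Nat.mul_div_cancel_left _ hℓ.pos] at h
      apply (ZMod.val_eq_zero _).mp
      rw [hk, h, mul_zero]
    have hcu : IsUnit c := by
      apply unitB hℓ
      rw [hcdef, ZMod.val_cast_of_lt (lt_of_lt_of_le hvlt (Nat.le_self_pow two_ne_zero ℓ))]
      intro h
      have := Nat.le_of_dvd (Nat.pos_of_ne_zero hvne) h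
      omega
    obtain ⟨u, hu⟩ := hcu
    have hcond : ∀ x : ZMod (ℓ ^ 2), (s : ZMod (ℓ ^ 2)) * x = x ↔ ℓ ∣ x.val := by
      intro x
      constructor
      · intro h
        have h0 : (ℓ : ZMod (ℓ ^ 2)) * (c * x) = 0 := by
          rw [← mul_assoc, ← hc]
          linear_combination h
        have huu : ((u⁻¹ : (ZMod (ℓ ^ 2))ˣ) : ZMod (ℓ ^ 2)) * (u : ZMod (ℓ ^ 2)) = 1 := by
          rw [← Units.val_mul, inv_mul_cancel, Units.val_one]
        have h1 : (ℓ : ZMod (ℓ ^ 2)) * x = 0 := by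
          calc (ℓ : ZMod (ℓ ^ 2)) * x
              = (((u⁻¹ : (ZMod (ℓ ^ 2))ˣ) : ZMod (ℓ ^ 2)) * (u : ZMod (ℓ ^ 2))) *
                ((ℓ : ZMod (ℓ ^ 2)) * x) := by rw [huu, one_mul]
            _ = ((u⁻¹ : (ZMod (ℓ ^ 2))ˣ) : ZMod (ℓ ^ 2)) *
                ((ℓ : ZMod (ℓ ^ 2)) * ((u : ZMod (ℓ ^ 2)) * x)) := by ring
            _ = ((u⁻¹ : (ZMod (ℓ ^ 2))ˣ) : ZMod (ℓ ^ 2)) *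
                ((ℓ : ZMod (ℓ ^ 2)) * (c * x)) := by rw [hu]
            _ = 0 := by rw [h0, mul_zero]
        exact (mulell_iff hℓ x).mp h1
      · intro h
        have h1 : ((s : ZMod (ℓ ^ 2)) - 1) * x = 0 := by
          rw [hc, mul_assoc, mul_comm c x, ← mul_assoc, mulell hℓ x h, zero_mul]
        linear_combination h1
    rw [Fcount, card_nonzero _ (fun i => by simp)]
    congr 1
    rw [Nat.card_congr (Equiv.subtypeEquivRight (q := fun v => ∀ i, ℓ ∣ (v i).val)
      (fun v => forall_congr' fun i => by rw [add_zero]; exact hcond (v i)))]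
    exact case2card hℓ
  · -- case 3 : r ≠ 0, s ≡ 1 mod ℓ
    intro r s hr hs
    rw [Fcount, card_nonzero _ (fun i => by simp)]
    rw [case3card hℓ r hr s (spow hℓ s hs)]
  · -- case 4 : s ≢ 1 mod ℓ
    intro r s hs
    rw [Fcount]
    have : ∀ v : ZMod ℓ → ZMod (ℓ ^ 2),
        (∀ i, (s : ZMod (ℓ ^ 2)) * v (i + r) = v i) → v = 0 := by
      intro v hv
      by_cases hr : r = 0
      · have hu : IsUnit ((s : ZMod (ℓ ^ 2)) - 1) := by
          apply unitB hℓ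
          intro hd
          apply hs
          have h0 := (castA hℓ _).mpr hd
          rw [map_sub, map_one, sub_eq_zero] at h0
          exact h0
        funext i
        have := hv i
        rw [hr, add_zero] at this
        have h1 : ((s : ZMod (ℓ ^ 2)) - 1) * v i = 0 := by linear_combination this
        simpa using (hu.mul_right_eq_zero).mp h1
      · have hu : IsUnit (((s ^ ℓ : (ZMod (ℓ ^ 2))ˣ) : ZMod (ℓ ^ 2)) - 1) := by
          apply unitB hℓ
          intro hd
          apply hs
          have h0 := (castA hℓ _).mpr hd
          rw [map_sub, map_one, sub_eq_zero, Units.val_pow_eq_pow_val, map_pow,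
            ZMod.pow_card] at h0
          exact h0
        have h00 := recform r s v hv ℓ
        rw [ZMod.natCast_self, zero_mul] at h00
        have hv0 : v 0 = 0 := by
          apply (hu.mul_right_eq_zero).mp
          linear_combination h00
        funext i
        rw [solform hℓ r hr s v hv i, hv0, mul_zero]
        rfl
    haveI : IsEmpty {v : ZMod ℓ → ZMod (ℓ ^ 2) // v ≠ 0 ∧
        ∀ i, (s : ZMod (ℓ ^ 2)) * v (i + r) = v i} :=
      ⟨fun ⟨v, hv0, hv⟩ => hv0 (this v hv)⟩
    exact Nat.card_of_isEmpty
end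

section
/- Let ℓ be an odd prime. Let the group ZMod ℓ × (ZMod ℓ²)ˣ act on the set of nonzero vectors v : ZMod ℓ → ZMod ℓ² by (r, s)·v = s • (r • v), where (r • v)(i) = v(i + r). Then the number of orbits of this action equals (ℓ^{2ℓ} − 1 + (ℓ − 1)(ℓ^{ℓ} − 1) + (ℓ − 1) · ℓ · (ℓ² − 1)) / (ℓ² (ℓ − 1)). -/
open MulAction

section Aux

variable (ℓ : ℕ)

abbrev BGr := Multiplicative (ZMod ℓ) × (ZMod (ℓ ^ 2))ˣ

instance : MulAction (BGr ℓ) (ZMod ℓ → ZMod (ℓ ^ 2)) where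
  smul g v := fun i => (g.2 : ZMod (ℓ ^ 2)) * v (i + g.1.toAdd)
  one_smul v := funext fun i => by
    show ((1 : (ZMod (ℓ ^ 2))ˣ) : ZMod (ℓ ^ 2)) * v (i + (1 : Multiplicative (ZMod ℓ)).toAdd) = v i
    simp
  mul_smul g h v := funext fun i => by
    show ((g.2 * h.2 : (ZMod (ℓ ^ 2))ˣ) : ZMod (ℓ ^ 2)) * v (i + (g.1 * h.1).toAdd)
        = (g.2 : ZMod (ℓ ^ 2)) * ((h.2 : ZMod (ℓ ^ 2)) * v (i + g.1.toAdd + h.1.toAdd))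
    rw [toAdd_mul, ← add_assoc, Units.val_mul, mul_assoc]

lemma smul_def' (g : BGr ℓ) (v : ZMod ℓ → ZMod (ℓ ^ 2)) :
    g • v = fun i => (g.2 : ZMod (ℓ ^ 2)) * v (i + g.1.toAdd) := rfl

/-- reduction mod ℓ -/
def redu : ZMod (ℓ ^ 2) →+* ZMod ℓ :=
  ZMod.castHom (dvd_pow_self ℓ two_ne_zero) (ZMod ℓ)

variable {ℓ}

lemma natCast_val_cast {n : ℕ} [NeZero n] (a : ZMod n) : ((a.val : ℕ) : ZMod n) = a :=
  ZMod.natCast_rightInverse a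

lemma redu_sec [NeZero ℓ] (b : ZMod ℓ) : redu ℓ ((b.val : ℕ) : ZMod (ℓ ^ 2)) = b := by
  rw [map_natCast]; exact ZMod.natCast_rightInverse b

lemma card_fiber [NeZero ℓ] (c : ZMod ℓ) :
    Nat.card {a : ZMod (ℓ ^ 2) | redu ℓ a = c} = ℓ := by
  haveI : NeZero (ℓ ^ 2) := ⟨pow_ne_zero _ (NeZero.ne ℓ)⟩
  have hpos : 0 < ℓ := Nat.pos_of_ne_zero (NeZero.ne ℓ)
  set sec : ZMod ℓ → ZMod (ℓ ^ 2) := fun b => ((b.val : ℕ) : ZMod (ℓ ^ 2)) with hsec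
  have key : ∀ b, redu ℓ (sec b) = b := fun b => redu_sec b
  have e2 : {a : ZMod (ℓ ^ 2) | redu ℓ a = c} ≃ {a : ZMod (ℓ ^ 2) | redu ℓ a = 0} :=
  { toFun := fun x => ⟨x.1 - sec c, by
      have := x.2
      simp only [Set.mem_setOf_eq] at this ⊢
      rw [map_sub, this, key, sub_self]⟩
    invFun := fun y => ⟨y.1 + sec c, by
      have := y.2
      simp only [Set.mem_setOf_eq] at this ⊢
      rw [map_add, this, key, zero_add]⟩
    left_inv := fun x => by simp
    right_inv := fun y => by simp }
  have e1 : ZMod (ℓ ^ 2) ≃ ZMod ℓ × {a : ZMod (ℓ ^ 2) | redu ℓ a = 0} :=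
  { toFun := fun x => ⟨redu ℓ x, ⟨x - sec (redu ℓ x), by
      simp only [Set.mem_setOf_eq]
      rw [map_sub, key, sub_self]⟩⟩
    invFun := fun p => sec p.1 + p.2.1
    left_inv := fun x => by simp
    right_inv := fun p => by
      have h2 := p.2.2
      simp only [Set.mem_setOf_eq] at h2
      ext
      · simp [map_add, key, h2]
      · simp [map_add, key, h2] }
  have hc : Nat.card (ZMod (ℓ ^ 2)) = ℓ * Nat.card {a : ZMod (ℓ ^ 2) | redu ℓ a = 0} := by
    rw [Nat.card_congr e1, Nat.card_prod, Nat.card_zmod]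
  rw [Nat.card_zmod] at hc
  have hc' : ℓ * ℓ = ℓ * Nat.card {a : ZMod (ℓ ^ 2) | redu ℓ a = 0} := by
    rw [← pow_two]; exact hc
  rw [Nat.card_congr e2]
  exact (Nat.eq_of_mul_eq_mul_left hpos hc').symm

lemma isUnit_of_redu_ne_zero (hℓ : ℓ.Prime) {a : ZMod (ℓ ^ 2)} (h : redu ℓ a ≠ 0) :
    IsUnit a := by
  haveI : NeZero ℓ := ⟨hℓ.ne_zero⟩
  haveI : NeZero (ℓ ^ 2) := ⟨pow_ne_zero _ hℓ.ne_zero⟩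
  have ha : a = ((a.val : ℕ) : ZMod (ℓ ^ 2)) := (natCast_val_cast a).symm
  have hdvd : ¬ ℓ ∣ a.val := by
    intro hd
    apply h
    rw [ha, map_natCast, ZMod.natCast_eq_zero_iff]
    exact hd
  have hcop : (a.val).Coprime (ℓ ^ 2) :=
    Nat.Coprime.pow_right _ ((hℓ.coprime_iff_not_dvd.mpr hdvd).symm)
  rw [ha]
  exact (ZMod.isUnit_iff_coprime _ _).mpr hcop

lemma redu_zero_iff (hℓ : ℓ.Prime) (x : ZMod (ℓ ^ 2)) :
    redu ℓ x = 0 ↔ ℓ ∣ x.val := by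
  haveI : NeZero ℓ := ⟨hℓ.ne_zero⟩
  haveI : NeZero (ℓ ^ 2) := ⟨pow_ne_zero _ hℓ.ne_zero⟩
  conv_lhs => rw [← natCast_val_cast x]
  rw [map_natCast, ZMod.natCast_eq_zero_iff]

lemma card_ann (hℓ : ℓ.Prime) {d : ZMod (ℓ ^ 2)} (hd : d ≠ 0) (h0 : redu ℓ d = 0) :
    Nat.card {x : ZMod (ℓ ^ 2) | d * x = 0} = ℓ := by
  haveI : NeZero ℓ := ⟨hℓ.ne_zero⟩
  haveI : NeZero (ℓ ^ 2) := ⟨pow_ne_zero _ hℓ.ne_zero⟩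
  obtain ⟨m, hm⟩ := (redu_zero_iff hℓ d).mp h0
  have hdm : d = ((ℓ * m : ℕ) : ZMod (ℓ ^ 2)) := by rw [← hm, natCast_val_cast]
  have hℓm : ¬ ℓ ∣ m := by
    intro ⟨k, hk⟩
    apply hd
    rw [hdm, hk, ← mul_assoc, ← pow_two, Nat.cast_mul, ZMod.natCast_self, zero_mul]
  have hu : IsUnit ((m : ℕ) : ZMod (ℓ ^ 2)) := by
    apply isUnit_of_redu_ne_zero hℓ
    rw [map_natCast, Ne, ZMod.natCast_eq_zero_iff]
    exact hℓm
  have hset : {x : ZMod (ℓ ^ 2) | d * x = 0} = {x : ZMod (ℓ ^ 2) | redu ℓ x = 0} := by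
    ext x
    simp only [Set.mem_setOf_eq]
    rw [hdm, Nat.cast_mul, redu_zero_iff hℓ]
    constructor
    · intro hx
      have : ((m : ℕ) : ZMod (ℓ ^ 2)) * ((ℓ : ℕ) * x) = 0 := by
        rw [← hx]; ring
      have h2 : ((ℓ : ℕ) : ZMod (ℓ ^ 2)) * x = 0 := by
        obtain ⟨u, hu'⟩ := hu
        rwa [← hu', Units.mul_right_eq_zero] at this
      rw [← natCast_val_cast x, ← Nat.cast_mul, ZMod.natCast_eq_zero_iff] at h2
      obtain ⟨k, hk⟩ := h2
      refine ⟨k, ?_⟩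
      have h3 : ℓ * x.val = ℓ * (ℓ * k) := by rw [hk]; ring
      exact Nat.eq_of_mul_eq_mul_left hℓ.pos h3
    · intro hx
      obtain ⟨k, hk⟩ := hx
      have : x = ((ℓ * k : ℕ) : ZMod (ℓ ^ 2)) := by rw [← hk, natCast_val_cast]
      rw [this]
      push_cast
      have : (ℓ : ZMod (ℓ ^ 2)) * m * ((ℓ : ZMod (ℓ ^ 2)) * k) = ((ℓ ^ 2 : ℕ) : ZMod (ℓ ^ 2)) * (m * k) := by
        push_cast; ring
      rw [this, ZMod.natCast_self, zero_mul]
  rw [hset]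
  exact card_fiber 0

lemma card_units_fiber (hℓ : ℓ.Prime) :
    Nat.card {s : (ZMod (ℓ ^ 2))ˣ | redu ℓ ↑s = 1} = ℓ := by
  haveI : NeZero ℓ := ⟨hℓ.ne_zero⟩
  haveI : Fact (1 < ℓ) := ⟨hℓ.one_lt⟩
  have e : {s : (ZMod (ℓ ^ 2))ˣ | redu ℓ ↑s = 1} ≃ {a : ZMod (ℓ ^ 2) | redu ℓ a = 1} := by
    refine Equiv.ofBijective (fun s => ⟨↑s.1, s.2⟩) ⟨?_, ?_⟩
    · intro s t hst
      exact Subtype.ext (Units.ext (congrArg Subtype.val hst))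
    · rintro ⟨a, ha⟩
      have hu : IsUnit a := by
        apply isUnit_of_redu_ne_zero hℓ
        rw [ha]; exact one_ne_zero
      refine ⟨⟨hu.unit, ?_⟩, ?_⟩
      · show redu ℓ ↑hu.unit = 1
        rw [IsUnit.unit_spec]; exact ha
      · exact Subtype.ext hu.unit_spec
  rw [Nat.card_congr e]
  exact card_fiber 1

lemma pow_ell_eq_one (hℓ : ℓ.Prime) {s : (ZMod (ℓ ^ 2))ˣ} (hs : redu ℓ (↑s) = 1) :
    s ^ ℓ = 1 := by
  haveI : NeZero ℓ := ⟨hℓ.ne_zero⟩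
  haveI : NeZero (ℓ ^ 2) := ⟨pow_ne_zero _ hℓ.ne_zero⟩
  obtain ⟨d, hd⟩ : ∃ d : ZMod (ℓ ^ 2), d = (↑s : ZMod (ℓ ^ 2)) - 1 := ⟨_, rfl⟩
  have h0 : redu ℓ d = 0 := by rw [hd, map_sub, hs, map_one, sub_self]
  obtain ⟨m, hm⟩ := (redu_zero_iff hℓ d).mp h0
  have hdm : d = ((ℓ * m : ℕ) : ZMod (ℓ ^ 2)) := by rw [← hm, natCast_val_cast]
  have hld : (ℓ : ZMod (ℓ ^ 2)) * d = 0 := by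
    rw [hdm]
    push_cast
    rw [← mul_assoc, ← Nat.cast_mul ℓ ℓ]
    rw [show ℓ * ℓ = ℓ ^ 2 by ring, ZMod.natCast_self, zero_mul]
  have hd2 : d * d = 0 := by
    rw [hdm]
    push_cast
    rw [show (ℓ : ZMod (ℓ ^ 2)) * ↑m * ((ℓ : ZMod (ℓ ^ 2)) * ↑m) = ((ℓ * ℓ : ℕ)) * (↑m * ↑m) by push_cast; ring]
    rw [show ℓ * ℓ = ℓ ^ 2 by ring, ZMod.natCast_self, zero_mul]
  have key : ∀ n : ℕ, ((↑s : ZMod (ℓ ^ 2))) ^ n = 1 + (n : ZMod (ℓ ^ 2)) * d := by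
    intro n
    induction n with
    | zero => simp
    | succ n ih =>
      rw [pow_succ (↑s : ZMod (ℓ ^ 2)) n]
      rw [ih]
      push_cast
      linear_combination (n : ZMod (ℓ ^ 2)) * hd2 - (1 + (n : ZMod (ℓ ^ 2)) * d) * hd
  apply Units.ext
  rw [Units.val_pow_eq_pow_val, key ℓ, hld, add_zero, Units.val_one]

lemma redu_pow (hℓ : ℓ.Prime) (s : (ZMod (ℓ ^ 2))ˣ) :
    redu ℓ ((↑s : ZMod (ℓ ^ 2)) ^ ℓ) = redu ℓ (↑s) := by
  haveI : Fact ℓ.Prime := ⟨hℓ⟩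
  rw [map_pow, ZMod.pow_card]

lemma card_fixed_shift (hℓ : ℓ.Prime) [Fact ℓ.Prime] {r : ZMod ℓ} (hr : r ≠ 0)
    (s : (ZMod (ℓ ^ 2))ˣ) :
    Nat.card {v : ZMod ℓ → ZMod (ℓ ^ 2) | ∀ i, (↑s : ZMod (ℓ ^ 2)) * v (i + r) = v i}
      = Nat.card {a : ZMod (ℓ ^ 2) | (↑s : ZMod (ℓ ^ 2)) ^ ℓ * a = a} := by
  haveI : NeZero ℓ := ⟨hℓ.ne_zero⟩
  set S : ZMod (ℓ ^ 2) := (↑s : ZMod (ℓ ^ 2)) with hS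
  have h1 : ∀ v ∈ {v : ZMod ℓ → ZMod (ℓ ^ 2) | ∀ i, S * v (i + r) = v i},
      ∀ (k : ℕ) (i : ZMod ℓ), S ^ k * v (i + (k : ZMod ℓ) * r) = v i := by
    intro v hv k
    induction k with
    | zero => intro i; simp
    | succ k ih =>
      intro i
      have hidx : i + ((k : ℕ) + 1 : ZMod ℓ) * r = (i + (k : ZMod ℓ) * r) + r := by ring
      have : S ^ (k + 1) * v (i + ((k + 1 : ℕ) : ZMod ℓ) * r)
          = S ^ k * (S * v ((i + (k : ZMod ℓ) * r) + r)) := by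
        rw [pow_succ S k]
        push_cast
        rw [hidx]
        ring
      rw [this, hv (i + (k : ZMod ℓ) * r), ih i]
  have h2 : ∀ v ∈ {v : ZMod ℓ → ZMod (ℓ ^ 2) | ∀ i, S * v (i + r) = v i},
      ∀ i, S ^ ℓ * v i = v i := by
    intro v hv i
    have := h1 v hv ℓ i
    rwa [ZMod.natCast_self, zero_mul, add_zero] at this
  have hval_lt : ∀ j : ZMod ℓ, (j * r⁻¹).val ≤ ℓ := fun j => le_of_lt (ZMod.val_lt _)
  have hk_eq : ∀ j : ZMod ℓ, (((j * r⁻¹).val : ℕ) : ZMod ℓ) * r = j := by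
    intro j
    rw [ZMod.natCast_rightInverse (j * r⁻¹)]
    field_simp
  have h3 : ∀ v ∈ {v : ZMod ℓ → ZMod (ℓ ^ 2) | ∀ i, S * v (i + r) = v i},
      ∀ j, v j = S ^ (ℓ - (j * r⁻¹).val) * v 0 := by
    intro v hv j
    have hk := h1 v hv (j * r⁻¹).val 0
    rw [hk_eq j, zero_add] at hk
    have : S ^ (ℓ - (j * r⁻¹).val) * v 0 = S ^ (ℓ - (j * r⁻¹).val) * (S ^ (j * r⁻¹).val * v j) := by
      rw [hk]
    rw [this, ← mul_assoc, ← pow_add, Nat.sub_add_cancel (hval_lt j)]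
    exact (h2 v hv j).symm
  refine Nat.card_congr (Equiv.ofBijective (fun v => ⟨v.1 0, h2 v.1 v.2 0⟩) ⟨?_, ?_⟩)
  · rintro ⟨v, hv⟩ ⟨w, hw⟩ h
    have h0 : v 0 = w 0 := congrArg Subtype.val h
    refine Subtype.ext (funext fun j => ?_)
    show v j = w j
    rw [h3 v hv j, h3 w hw j, h0]
  · rintro ⟨a, ha⟩
    simp only [Set.mem_setOf_eq] at ha
    refine ⟨⟨fun j => S ^ (ℓ - (j * r⁻¹).val) * a, ?_⟩, ?_⟩
    · intro i
      simp only
      haveI : Fact (1 < ℓ) := ⟨hℓ.one_lt⟩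
      have hxe : (i + r) * r⁻¹ = i * r⁻¹ + 1 := by field_simp
      have he_lt : (i * r⁻¹).val < ℓ := ZMod.val_lt _
      have he' : ((i + r) * r⁻¹).val = ((i * r⁻¹).val + 1) % ℓ := by
        rw [hxe, ZMod.val_add, ZMod.val_one]
      rcases lt_or_eq_of_le (Nat.succ_le_of_lt he_lt) with hlt | heq
      · rw [he', Nat.mod_eq_of_lt hlt]
        rw [← mul_assoc, ← pow_succ' S]
        have : ℓ - ((i * r⁻¹).val + 1) + 1 = ℓ - (i * r⁻¹).val := by omega
        rw [this]
      · have heq' : (i * r⁻¹).val + 1 = ℓ := heq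
        rw [he', heq', Nat.mod_self, Nat.sub_zero, ha]
        have : ℓ - (i * r⁻¹).val = 1 := by omega
        rw [this, pow_one]
    · simp only [Set.mem_setOf_eq]
      have : ((0 : ZMod ℓ) * r⁻¹).val = 0 := by rw [zero_mul, ZMod.val_zero]
      simp only [this, Nat.sub_zero]
      exact Subtype.ext ha

lemma card_eigen (hℓ : ℓ.Prime) [Fact ℓ.Prime] (s : (ZMod (ℓ ^ 2))ˣ) :
    Nat.card {a : ZMod (ℓ ^ 2) | (↑s : ZMod (ℓ ^ 2)) ^ ℓ * a = a}
      = if redu ℓ ↑s = 1 then ℓ ^ 2 else 1 := by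
  haveI : NeZero ℓ := ⟨hℓ.ne_zero⟩
  haveI : NeZero (ℓ ^ 2) := ⟨pow_ne_zero _ hℓ.ne_zero⟩
  by_cases hs : redu ℓ (↑s : ZMod (ℓ ^ 2)) = 1
  · rw [if_pos hs]
    have h1 : (↑s : ZMod (ℓ ^ 2)) ^ ℓ = 1 := by
      have := pow_ell_eq_one hℓ hs
      calc (↑s : ZMod (ℓ ^ 2)) ^ ℓ = ((s ^ ℓ : (ZMod (ℓ ^ 2))ˣ) : ZMod (ℓ ^ 2)) := by
            rw [Units.val_pow_eq_pow_val]
        _ = 1 := by rw [this, Units.val_one]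
    have : {a : ZMod (ℓ ^ 2) | (↑s : ZMod (ℓ ^ 2)) ^ ℓ * a = a} = Set.univ := by
      ext a; simp [h1]
    rw [this]
    rw [Nat.card_congr (Equiv.Set.univ _), Nat.card_zmod]
  · rw [if_neg hs]
    have hu : IsUnit ((↑s : ZMod (ℓ ^ 2)) ^ ℓ - 1) := by
      apply isUnit_of_redu_ne_zero hℓ
      rw [map_sub, map_one, redu_pow hℓ]
      exact sub_ne_zero.mpr hs
    have : {a : ZMod (ℓ ^ 2) | (↑s : ZMod (ℓ ^ 2)) ^ ℓ * a = a} = {(0 : ZMod (ℓ ^ 2))} := by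
      ext a
      simp only [Set.mem_setOf_eq, Set.mem_singleton_iff]
      constructor
      · intro h
        have : ((↑s : ZMod (ℓ ^ 2)) ^ ℓ - 1) * a = 0 := by
          rw [sub_mul, one_mul, h, sub_self]
        exact (hu.mul_right_eq_zero).mp this
      · rintro rfl; rw [mul_zero]
    rw [this]
    exact Nat.card_unique

lemma card_pi_mem [NeZero ℓ] (K : Set (ZMod (ℓ ^ 2))) :
    Nat.card {v : ZMod ℓ → ZMod (ℓ ^ 2) | ∀ i, v i ∈ K} = Nat.card K ^ ℓ := by
  have e : {v : ZMod ℓ → ZMod (ℓ ^ 2) | ∀ i, v i ∈ K} ≃ (ZMod ℓ → K) :=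
    Equiv.subtypePiEquivPi
  rw [Nat.card_congr e, Nat.card_fun, Nat.card_zmod]

end Aux

section Aux2

variable {ℓ : ℕ}

open MulAction in
lemma card_fixedBy' (hℓ : ℓ.Prime) [Fact ℓ.Prime] (g : BGr ℓ) :
    Nat.card (MulAction.fixedBy (ZMod ℓ → ZMod (ℓ ^ 2)) g)
      = if g.1.toAdd = 0 then
          (if g.2 = 1 then ℓ ^ (2 * ℓ) else if redu ℓ ↑g.2 = 1 then ℓ ^ ℓ else 1)
        else (if redu ℓ ↑g.2 = 1 then ℓ ^ 2 else 1) := by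
  classical
  obtain ⟨r, s⟩ := g
  haveI : NeZero ℓ := ⟨hℓ.ne_zero⟩
  haveI : NeZero (ℓ ^ 2) := ⟨pow_ne_zero _ hℓ.ne_zero⟩
  have hfix : (MulAction.fixedBy (ZMod ℓ → ZMod (ℓ ^ 2)) (r, s) : Set _)
      = {v : ZMod ℓ → ZMod (ℓ ^ 2) | ∀ i, (↑s : ZMod (ℓ ^ 2)) * v (i + r.toAdd) = v i} := by
    ext v
    show (r, s) • v = v ↔ _
    rw [smul_def']
    exact funext_iff
  rw [hfix]
  by_cases hr : r.toAdd = 0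
  · rw [if_pos hr]
    have hset : {v : ZMod ℓ → ZMod (ℓ ^ 2) | ∀ i, (↑s : ZMod (ℓ ^ 2)) * v (i + r.toAdd) = v i}
        = {v : ZMod ℓ → ZMod (ℓ ^ 2) | ∀ i,
            v i ∈ {x : ZMod (ℓ ^ 2) | ((↑s : ZMod (ℓ ^ 2)) - 1) * x = 0}} := by
      ext v
      simp only [Set.mem_setOf_eq, hr, add_zero]
      constructor
      · intro h i
        rw [sub_mul, one_mul, h i, sub_self]
      · intro h i
        have := h i
        rwa [sub_mul, one_mul, sub_eq_zero] at this
    rw [hset, card_pi_mem]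
    by_cases h1 : s = 1
    · rw [if_pos h1]
      have : {x : ZMod (ℓ ^ 2) | ((↑s : ZMod (ℓ ^ 2)) - 1) * x = 0} = Set.univ := by
        ext x; simp [h1]
      rw [this, Nat.card_congr (Equiv.Set.univ _), Nat.card_zmod, ← pow_mul]
    · rw [if_neg h1]
      have hs1 : (↑s : ZMod (ℓ ^ 2)) - 1 ≠ 0 := by
        refine sub_ne_zero.mpr fun h => h1 (Units.ext ?_)
        rw [h, Units.val_one]
      by_cases h2 : redu ℓ (↑s : ZMod (ℓ ^ 2)) = 1
      · rw [if_pos h2]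
        rw [card_ann hℓ hs1 (by rw [map_sub, h2, map_one, sub_self])]
      · rw [if_neg h2]
        have hu : IsUnit ((↑s : ZMod (ℓ ^ 2)) - 1) :=
          isUnit_of_redu_ne_zero hℓ (by rw [map_sub, map_one]; exact sub_ne_zero.mpr h2)
        have : {x : ZMod (ℓ ^ 2) | ((↑s : ZMod (ℓ ^ 2)) - 1) * x = 0} = {0} := by
          ext x
          simp only [Set.mem_setOf_eq, Set.mem_singleton_iff]
          rw [hu.mul_right_eq_zero]
        rw [this, Nat.card_unique, one_pow]
  · rw [if_neg hr, card_fixed_shift hℓ hr s, card_eigen hℓ s]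

lemma filter_card_units (hℓ : ℓ.Prime) [NeZero (ℓ ^ 2)] :
    (Finset.univ.filter (fun s : (ZMod (ℓ ^ 2))ˣ => redu ℓ ↑s = 1)).card = ℓ := by
  haveI : NeZero ℓ := ⟨hℓ.ne_zero⟩
  have := card_units_fiber hℓ
  rw [Nat.card_eq_fintype_card, Fintype.card_subtype] at this
  have heq : (Finset.univ.filter (fun s : (ZMod (ℓ ^ 2))ˣ => redu ℓ ↑s = 1))
      = (Finset.univ.filter (fun x : (ZMod (ℓ ^ 2))ˣ => x ∈ {s : (ZMod (ℓ ^ 2))ˣ | redu ℓ ↑s = 1})) :=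
    Finset.filter_congr (fun x _ => by simp)
  rw [heq]
  exact this

lemma sum_units (hℓ : ℓ.Prime) [NeZero (ℓ ^ 2)] (A B C : ℚ) :
    (∑ s : (ZMod (ℓ ^ 2))ˣ, (if s = 1 then A else if redu ℓ ↑s = 1 then B else C))
      = (A - B) + ℓ * (B - C) + (ℓ * (ℓ - 1)) * C := by
  classical
  haveI : NeZero ℓ := ⟨hℓ.ne_zero⟩
  have hpt : ∀ s : (ZMod (ℓ ^ 2))ˣ, (if s = 1 then A else if redu ℓ ↑s = 1 then B else C)
      = C + (if redu ℓ ↑s = 1 then B - C else 0) + (if s = 1 then A - B else 0) := by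
    intro s
    by_cases h1 : s = 1
    · have h2 : redu ℓ ((↑(1 : (ZMod (ℓ ^ 2))ˣ)) : ZMod (ℓ ^ 2)) = 1 := by
        rw [Units.val_one, map_one]
      subst h1
      rw [if_pos rfl, if_pos rfl, if_pos h2]
      ring
    · rw [if_neg h1, if_neg h1, add_zero]
      by_cases h2 : redu ℓ (↑s : ZMod (ℓ ^ 2)) = 1
      · rw [if_pos h2, if_pos h2]; ring
      · rw [if_neg h2, if_neg h2]; ring
  rw [Finset.sum_congr rfl (fun s _ => hpt s)]
  rw [Finset.sum_add_distrib, Finset.sum_add_distrib, Finset.sum_const,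
    ← Finset.sum_filter, ← Finset.sum_filter, Finset.sum_const, Finset.sum_const,
    filter_card_units hℓ, Finset.filter_eq' Finset.univ 1, if_pos (Finset.mem_univ 1),
    Finset.card_singleton, Finset.card_univ, ZMod.card_units_eq_totient,
    Nat.totient_prime_pow hℓ (by norm_num : 0 < 2)]
  have h21 : ℓ ^ (2 - 1) = ℓ := by norm_num
  rw [h21]
  simp only [nsmul_eq_mul, Nat.cast_mul, Nat.cast_sub hℓ.one_le, Nat.cast_one, one_mul]
  ring

lemma sum_units2 (hℓ : ℓ.Prime) [NeZero (ℓ ^ 2)] (B C : ℚ) :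
    (∑ s : (ZMod (ℓ ^ 2))ˣ, (if redu ℓ ↑s = 1 then B else C))
      = ℓ * B + (ℓ * (ℓ - 1)) * C - ℓ * C := by
  classical
  haveI : NeZero ℓ := ⟨hℓ.ne_zero⟩
  have hpt : ∀ s : (ZMod (ℓ ^ 2))ˣ, (if redu ℓ ↑s = 1 then B else C)
      = C + (if redu ℓ ↑s = 1 then B - C else 0) := by
    intro s
    by_cases h2 : redu ℓ (↑s : ZMod (ℓ ^ 2)) = 1
    · rw [if_pos h2, if_pos h2]; ring
    · rw [if_neg h2, if_neg h2]; ring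
  rw [Finset.sum_congr rfl (fun s _ => hpt s)]
  rw [Finset.sum_add_distrib, Finset.sum_const, ← Finset.sum_filter, Finset.sum_const,
    filter_card_units hℓ, Finset.card_univ, ZMod.card_units_eq_totient,
    Nat.totient_prime_pow hℓ (by norm_num : 0 < 2)]
  have h21 : ℓ ^ (2 - 1) = ℓ := by norm_num
  rw [h21]
  simp only [nsmul_eq_mul, Nat.cast_mul, Nat.cast_sub hℓ.one_le, Nat.cast_one, one_mul]
  ring

lemma sum_mult [NeZero ℓ] (X Y : ℚ) :
    (∑ r : Multiplicative (ZMod ℓ), (if r.toAdd = 0 then X else Y))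
      = (X - Y) + ℓ * Y := by
  classical
  have hpt : ∀ r : Multiplicative (ZMod ℓ), (if r.toAdd = 0 then X else Y)
      = Y + (if r = Multiplicative.ofAdd 0 then X - Y else 0) := by
    intro r
    by_cases h : r.toAdd = 0
    · rw [if_pos h, if_pos (by rw [← h]; rfl)]; ring
    · rw [if_neg h, if_neg (by intro hh; exact h (by rw [hh]; rfl)), add_zero]
  rw [Finset.sum_congr rfl (fun r _ => hpt r)]
  rw [Finset.sum_add_distrib, Finset.sum_const, Finset.sum_ite_eq' Finset.univ,
    if_pos (Finset.mem_univ _), Finset.card_univ, Fintype.card_multiplicative, ZMod.card]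
  ring

end Aux2

theorem burnside_orbit_count_Cl2_wr_Cl (ℓ : ℕ) (hℓ : ℓ.Prime) (hodd : Odd ℓ) :
    (Nat.card ↥{o : Set (ZMod ℓ → ZMod (ℓ ^ 2)) | ∃ v : ZMod ℓ → ZMod (ℓ ^ 2), v ≠ 0 ∧
        o = {w | ∃ (r : ZMod ℓ) (s : (ZMod (ℓ ^ 2))ˣ),
          w = fun i => (s : ZMod (ℓ ^ 2)) * v (i + r)}} : ℚ)
      = ((ℓ : ℚ) ^ (2 * ℓ) - 1 + ((ℓ : ℚ) - 1) * ((ℓ : ℚ) ^ ℓ - 1)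
          + ((ℓ : ℚ) - 1) * (ℓ : ℚ) * ((ℓ : ℚ) ^ 2 - 1))
        / ((ℓ : ℚ) ^ 2 * ((ℓ : ℚ) - 1)) := by
  classical
  haveI hfact : Fact ℓ.Prime := ⟨hℓ⟩
  haveI : NeZero ℓ := ⟨hℓ.ne_zero⟩
  haveI : NeZero (ℓ ^ 2) := ⟨pow_ne_zero _ hℓ.ne_zero⟩
  -- orbits as group orbits
  have horb : ∀ v : ZMod ℓ → ZMod (ℓ ^ 2),
      {w | ∃ (r : ZMod ℓ) (s : (ZMod (ℓ ^ 2))ˣ), w = fun i => (s : ZMod (ℓ ^ 2)) * v (i + r)}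
        = MulAction.orbit (BGr ℓ) v := by
    intro v
    ext w
    simp only [Set.mem_setOf_eq, MulAction.mem_orbit_iff]
    constructor
    · rintro ⟨r, s, rfl⟩
      exact ⟨(Multiplicative.ofAdd r, s), rfl⟩
    · rintro ⟨g, rfl⟩
      exact ⟨g.1.toAdd, g.2, rfl⟩
  have hS : {o : Set (ZMod ℓ → ZMod (ℓ ^ 2)) | ∃ v : ZMod ℓ → ZMod (ℓ ^ 2), v ≠ 0 ∧
        o = {w | ∃ (r : ZMod ℓ) (s : (ZMod (ℓ ^ 2))ˣ),
          w = fun i => (s : ZMod (ℓ ^ 2)) * v (i + r)}}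
      = {o : Set (ZMod ℓ → ZMod (ℓ ^ 2)) | ∃ v, v ≠ 0 ∧ o = MulAction.orbit (BGr ℓ) v} := by
    ext o
    constructor
    · rintro ⟨v, hv, rfl⟩
      exact ⟨v, hv, horb v⟩
    · rintro ⟨v, hv, rfl⟩
      exact ⟨v, hv, (horb v).symm⟩
  rw [hS]
  set Sset := {o : Set (ZMod ℓ → ZMod (ℓ ^ 2)) | ∃ v, v ≠ 0 ∧ o = MulAction.orbit (BGr ℓ) v}
    with hSset
  -- orbit of zero
  have horb0 : MulAction.orbit (BGr ℓ) (0 : ZMod ℓ → ZMod (ℓ ^ 2)) = {0} := by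
    ext w
    simp only [MulAction.mem_orbit_iff, Set.mem_singleton_iff]
    constructor
    · rintro ⟨g, rfl⟩
      funext i
      show (g.2 : ZMod (ℓ ^ 2)) * (0 : ZMod ℓ → ZMod (ℓ ^ 2)) (i + g.1.toAdd) = 0
      simp
    · rintro rfl
      exact ⟨1, one_smul _ _⟩
  have hnotin : ({0} : Set (ZMod ℓ → ZMod (ℓ ^ 2))) ∉ Sset := by
    rintro ⟨v, hv, h⟩
    apply hv
    have hm : v ∈ MulAction.orbit (BGr ℓ) v := MulAction.mem_orbit_self v
    rw [← h] at hm
    simpa using hm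
  have hrange : Set.range (fun v : ZMod ℓ → ZMod (ℓ ^ 2) => MulAction.orbit (BGr ℓ) v)
      = insert ({0} : Set (ZMod ℓ → ZMod (ℓ ^ 2))) Sset := by
    ext o
    simp only [Set.mem_range, Set.mem_insert_iff]
    constructor
    · rintro ⟨v, rfl⟩
      by_cases hv : v = 0
      · left; rw [hv, horb0]
      · right; exact ⟨v, hv, rfl⟩
    · rintro (rfl | ⟨v, hv, rfl⟩)
      · exact ⟨0, horb0⟩
      · exact ⟨v, rfl⟩
  have hquot : Nat.card (MulAction.orbitRel.Quotient (BGr ℓ) (ZMod ℓ → ZMod (ℓ ^ 2)))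
      = Nat.card (Set.range (fun v : ZMod ℓ → ZMod (ℓ ^ 2) => MulAction.orbit (BGr ℓ) v)) := by
    apply Nat.card_congr
    refine Equiv.ofBijective
      (fun q => ⟨q.orbit, Quotient.inductionOn' q (fun a => ⟨a, rfl⟩)⟩) ⟨?_, ?_⟩
    · intro q1 q2 h
      have h' : q1.orbit = q2.orbit := congrArg Subtype.val h
      revert h'
      refine Quotient.inductionOn₂' q1 q2 (fun a b h' => ?_)
      exact Quotient.sound' ((MulAction.orbitRel_apply).mpr (MulAction.orbit_eq_iff.mp h'))
    · rintro ⟨o, v, rfl⟩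
      exact ⟨Quotient.mk'' v, rfl⟩
  have hins : Nat.card (Set.range (fun v : ZMod ℓ → ZMod (ℓ ^ 2) => MulAction.orbit (BGr ℓ) v))
      = Nat.card Sset + 1 := by
    rw [hrange, Nat.card_coe_set_eq, Nat.card_coe_set_eq,
      Set.ncard_insert_of_notMem hnotin]
  -- Burnside
  haveI : ∀ g : BGr ℓ, Fintype (MulAction.fixedBy (ZMod ℓ → ZMod (ℓ ^ 2)) g) :=
    fun g => Fintype.ofFinite _
  haveI : Fintype (MulAction.orbitRel.Quotient (BGr ℓ) (ZMod ℓ → ZMod (ℓ ^ 2))) :=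
    Fintype.ofFinite _
  have hb := MulAction.sum_card_fixedBy_eq_card_orbits_mul_card_group (BGr ℓ)
    (ZMod ℓ → ZMod (ℓ ^ 2))
  -- evaluate the sum in ℚ
  have hcf : ∀ g : BGr ℓ, (Fintype.card (MulAction.fixedBy (ZMod ℓ → ZMod (ℓ ^ 2)) g) : ℚ)
      = if g.1.toAdd = 0 then
          (if g.2 = 1 then (ℓ : ℚ) ^ (2 * ℓ) else if redu ℓ ↑g.2 = 1 then (ℓ : ℚ) ^ ℓ else 1)
        else (if redu ℓ ↑g.2 = 1 then (ℓ : ℚ) ^ 2 else 1) := by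
    intro g
    rw [← Nat.card_eq_fintype_card, card_fixedBy' hℓ g]
    split_ifs <;> push_cast <;> ring
  have hsum : (∑ g : BGr ℓ, (Fintype.card (MulAction.fixedBy (ZMod ℓ → ZMod (ℓ ^ 2)) g) : ℚ))
      = ((((ℓ : ℚ) ^ (2 * ℓ) - (ℓ : ℚ) ^ ℓ) + ℓ * ((ℓ : ℚ) ^ ℓ - 1) + (ℓ * (ℓ - 1)) * 1)
          - (ℓ * (ℓ : ℚ) ^ 2 + (ℓ * (ℓ - 1)) * 1 - ℓ * 1))
        + ℓ * (ℓ * (ℓ : ℚ) ^ 2 + (ℓ * (ℓ - 1)) * 1 - ℓ * 1) := by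
    rw [Finset.sum_congr rfl (fun g _ => hcf g)]
    rw [Fintype.sum_prod_type]
    have hinner : ∀ r : Multiplicative (ZMod ℓ),
        (∑ s : (ZMod (ℓ ^ 2))ˣ, (if r.toAdd = 0 then
            (if s = 1 then (ℓ : ℚ) ^ (2 * ℓ) else if redu ℓ ↑s = 1 then (ℓ : ℚ) ^ ℓ else 1)
          else (if redu ℓ ↑s = 1 then (ℓ : ℚ) ^ 2 else 1)))
        = if r.toAdd = 0 then
            (((ℓ : ℚ) ^ (2 * ℓ) - (ℓ : ℚ) ^ ℓ) + ℓ * ((ℓ : ℚ) ^ ℓ - 1) + (ℓ * (ℓ - 1)) * 1)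
          else (ℓ * (ℓ : ℚ) ^ 2 + (ℓ * (ℓ - 1)) * 1 - ℓ * 1) := by
      intro r
      by_cases hr : r.toAdd = 0
      · simp only [if_pos hr]
        exact sum_units hℓ _ _ _
      · simp only [if_neg hr]
        exact sum_units2 hℓ _ _
    rw [Finset.sum_congr rfl (fun r _ => hinner r)]
    exact sum_mult _ _
  -- card of the group
  have hcardG : (Fintype.card (BGr ℓ) : ℚ) = ℓ * (ℓ * (ℓ - 1)) := by
    rw [Fintype.card_prod, Fintype.card_multiplicative, ZMod.card,
      ZMod.card_units_eq_totient, Nat.totient_prime_pow hℓ (by norm_num : 0 < 2)]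
    have h21 : ℓ ^ (2 - 1) = ℓ := by norm_num
    rw [h21]
    simp only [Nat.cast_mul, Nat.cast_sub hℓ.one_le, Nat.cast_one]
  -- assemble
  have hcardΩ : (Fintype.card (MulAction.orbitRel.Quotient (BGr ℓ) (ZMod ℓ → ZMod (ℓ ^ 2))) : ℚ)
      = (Nat.card Sset : ℚ) + 1 := by
    rw [← Nat.card_eq_fintype_card, hquot, hins]
    push_cast
    ring
  have hbQ : (∑ g : BGr ℓ, (Fintype.card (MulAction.fixedBy (ZMod ℓ → ZMod (ℓ ^ 2)) g) : ℚ))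
      = ((Nat.card Sset : ℚ) + 1) * ((ℓ : ℚ) * (ℓ * (ℓ - 1))) := by
    rw [← hcardΩ, ← hcardG]
    rw [← Nat.cast_sum]
    rw [hb]
    push_cast
    ring
  rw [hsum] at hbQ
  have hl1 : (1 : ℚ) < (ℓ : ℚ) := by exact_mod_cast hℓ.one_lt
  have hl0 : (ℓ : ℚ) ≠ 0 := by positivity
  have hlm1 : (ℓ : ℚ) - 1 ≠ 0 := sub_ne_zero.mpr (ne_of_gt hl1)
  have hden : (ℓ : ℚ) ^ 2 * ((ℓ : ℚ) - 1) ≠ 0 := by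
    apply mul_ne_zero (pow_ne_zero _ hl0) hlm1
  rw [eq_div_iff hden]
  have hp2 : (ℓ : ℚ) ^ (2 * ℓ) = (ℓ : ℚ) ^ ℓ * (ℓ : ℚ) ^ ℓ := by
    rw [two_mul, pow_add]
  rw [hp2] at hbQ ⊢
  linear_combination -hbQ
end

section
/- Let q > 1 be a real number, A ≥ 1 a positive integer, b ≥ 1 an integer, and let a : ℕ → ℝ be a sequence with a(m) ≥ 0 for all m. Suppose there are a real polynomial P of degree b − 1 with positive leading coefficient, constants C > 0, C' ≥ 0, and δ with 0 < δ < 1/A, such that for all m ≥ 1: |Σ_{j=0}^{b−1} a(m + j) · q^{−j/A} − C · q^{m/A} · P(m)| ≤ C' · q^{m(1/A − δ)}. Then there exist constants C₁, C₂ > 0 and M such that for all m ≥ M: C₁ · q^{m/A} · m^{b−1} ≤ Σ_{i=1}^{m} a(i) ≤ C₂ · q^{m/A} · m^{b−1}. -/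
lemma poly_abs_le (Q : Polynomial ℝ) (e : ℕ) (hQ : Q.natDegree ≤ e) :
    ∀ x : ℝ, 1 ≤ x → |Q.eval x| ≤ (∑ i ∈ Finset.range (e+1), |Q.coeff i|) * x ^ e := by
  intro x hx
  have h0 : (0:ℝ) ≤ x := by linarith
  rw [Polynomial.eval_eq_sum_range' (Nat.lt_succ_of_le hQ) x, Finset.sum_mul]
  refine (Finset.abs_sum_le_sum_abs _ _).trans (Finset.sum_le_sum fun i hi => ?_)
  rw [abs_mul, abs_pow, abs_of_nonneg h0]
  exact mul_le_mul_of_nonneg_left (pow_le_pow_right₀ hx (by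
    simpa using Nat.lt_succ_iff.mp (Finset.mem_range.mp hi))) (abs_nonneg _)

lemma poly_lb (P : Polynomial ℝ) (hPlead : 0 < P.leadingCoeff) :
    ∃ x₀ : ℝ, ∀ x : ℝ, x₀ ≤ x → 0 ≤ x →
      P.leadingCoeff / 2 * x ^ P.natDegree ≤ P.eval x := by
  have hiseq := Polynomial.isEquivalent_atTop_lead P
  have hlo := hiseq.isLittleO.def (by norm_num : (0:ℝ) < 1/2)
  rw [Filter.eventually_atTop] at hlo
  obtain ⟨x₀, hx₀⟩ := hlo
  refine ⟨x₀, fun x hx hx0 => ?_⟩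
  have := hx₀ x hx
  simp only [Real.norm_eq_abs, Pi.sub_apply] at this
  have habs : |P.leadingCoeff * x ^ P.natDegree| = P.leadingCoeff * x ^ P.natDegree := by
    rw [abs_of_nonneg]; positivity
  rw [habs] at this
  nlinarith [abs_le.mp this]

lemma geom_Icc_le (r : ℝ) (hr : 1 < r) (m : ℕ) :
    ∑ i ∈ Finset.Icc 1 m, r ^ i ≤ r ^ m * (r / (r - 1)) := by
  have hr0 : 0 < r - 1 := by linarith
  induction m with
  | zero =>
    simp only [Finset.Icc_self, show Finset.Icc 1 0 = ∅ from rfl, Finset.sum_empty, pow_zero,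
      one_mul]
    exact le_of_lt (div_pos (by linarith) hr0)
  | succ n ih =>
    rw [Finset.sum_Icc_succ_top (Nat.le_add_left 1 n)]
    have : r ^ n * (r / (r-1)) + r ^ (n+1) = r ^ (n+1) * (r / (r-1)) := by
      field_simp; ring
    calc ∑ i ∈ Finset.Icc 1 n, r ^ i + r ^ (n+1) ≤ r ^ n * (r / (r-1)) + r ^ (n+1) := by linarith
    _ = r ^ (n+1) * (r / (r-1)) := this

set_option maxHeartbeats 800000 in
theorem tauberian_window_sums (q : ℝ) (hq : 1 < q) (A : ℕ) (hA : 1 ≤ A)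
    (b : ℕ) (hb : 1 ≤ b) (a : ℕ → ℝ) (ha : ∀ m, 0 ≤ a m)
    (P : Polynomial ℝ) (hPdeg : P.natDegree = b - 1) (hPlead : 0 < P.leadingCoeff)
    (C C' δ : ℝ) (hC : 0 < C) (hC' : 0 ≤ C') (hδ0 : 0 < δ) (hδ1 : δ < 1 / (A : ℝ))
    (h : ∀ m : ℕ, 1 ≤ m →
      |(∑ j ∈ Finset.range b, a (m + j) * q ^ (-(j : ℝ) / (A : ℝ)))
          - C * q ^ ((m : ℝ) / (A : ℝ)) * P.eval (m : ℝ)|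
        ≤ C' * q ^ ((m : ℝ) * (1 / (A : ℝ) - δ))) :
    ∃ C₁ C₂ : ℝ, 0 < C₁ ∧ 0 < C₂ ∧ ∃ M : ℕ, ∀ m : ℕ, M ≤ m →
      C₁ * q ^ ((m : ℝ) / (A : ℝ)) * (m : ℝ) ^ (b - 1) ≤ (∑ i ∈ Finset.Icc 1 m, a i) ∧
      (∑ i ∈ Finset.Icc 1 m, a i) ≤ C₂ * q ^ ((m : ℝ) / (A : ℝ)) * (m : ℝ) ^ (b - 1) := by
  have hq0 : (0:ℝ) < q := by linarith
  have hA0 : (0:ℝ) < (A:ℝ) := by exact_mod_cast hA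
  set r : ℝ := q ^ ((A:ℝ)⁻¹) with hr_def
  have hr1 : 1 < r := by
    rw [hr_def, Real.one_lt_rpow_iff_of_pos hq0]
    exact Or.inl ⟨hq, inv_pos.mpr hA0⟩
  have hr0 : (0:ℝ) < r := by linarith
  have hpow : ∀ i : ℕ, q ^ ((i:ℝ)/(A:ℝ)) = r ^ i := by
    intro i
    rw [div_eq_mul_inv, mul_comm, hr_def, Real.rpow_mul hq0.le, Real.rpow_natCast]
  set s : ℝ := q ^ (-δ) with hs_def
  have hs0 : (0:ℝ) < s := Real.rpow_pos_of_pos hq0 _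
  have hs1 : s < 1 := Real.rpow_lt_one_of_one_lt_of_neg hq (by linarith)
  have hsplit : ∀ n : ℕ, q ^ ((n:ℝ) * (1/(A:ℝ) - δ)) = r ^ n * s ^ n := by
    intro n
    have he : (n:ℝ) * (1/(A:ℝ) - δ) = (n:ℝ)/(A:ℝ) + (-δ) * (n:ℝ) := by ring
    rw [he, Real.rpow_add hq0, hpow, hs_def, Real.rpow_mul hq0.le, Real.rpow_natCast]
  set S : ℕ → ℝ := fun i => ∑ j ∈ Finset.range b, a (i + j) * q ^ (-(j : ℝ) / (A : ℝ)) with hS_def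
  have hwpos : ∀ j : ℕ, 0 < q ^ (-(j : ℝ) / (A : ℝ)) := fun j => Real.rpow_pos_of_pos hq0 _
  have hwle1 : ∀ j : ℕ, q ^ (-(j : ℝ) / (A : ℝ)) ≤ 1 := by
    intro j
    apply Real.rpow_le_one_of_one_le_of_nonpos hq.le
    apply div_nonpos_of_nonpos_of_nonneg _ hA0.le
    simp
  have haS : ∀ i, a i ≤ S i := by
    intro i
    have h0 : a (i + 0) * q ^ (-((0:ℕ) : ℝ) / (A : ℝ)) = a i := by norm_num
    calc a i = a (i + 0) * q ^ (-((0:ℕ) : ℝ) / (A : ℝ)) := h0.symm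
    _ ≤ S i := Finset.single_le_sum (f := fun j => a (i + j) * q ^ (-(j : ℝ) / (A : ℝ)))
        (fun j _ => mul_nonneg (ha _) (hwpos j).le) (Finset.mem_range.mpr hb)
  -- constants for upper bound
  set K : ℝ := ∑ i ∈ Finset.range (b - 1 + 1), |P.coeff i| with hK_def
  have hK0 : 0 ≤ K := Finset.sum_nonneg fun i _ => abs_nonneg _
  have hSub : ∀ i : ℕ, 1 ≤ i → S i ≤ (C * K * (i:ℝ) ^ (b-1) + C') * r ^ i := by
    intro i hi
    have hi1 : (1:ℝ) ≤ (i:ℝ) := by exact_mod_cast hi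
    have habs := abs_le.mp (h i hi)
    have hPle := poly_abs_le P (b-1) (le_of_eq hPdeg) (i:ℝ) hi1
    have hsle : s ^ i ≤ 1 := pow_le_one₀ hs0.le hs1.le
    have hri : (0:ℝ) < r ^ i := pow_pos hr0 i
    have h1 : S i ≤ C * r ^ i * P.eval (i:ℝ) + C' * (r ^ i * s ^ i) := by
      have h2 := habs.2
      rw [hpow, hsplit] at h2
      linarith
    have h2 : C * r ^ i * P.eval (i:ℝ) ≤ C * r ^ i * (K * (i:ℝ) ^ (b-1)) := by
      have hp := (le_abs_self (P.eval (i:ℝ))).trans hPle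
      exact mul_le_mul_of_nonneg_left hp (mul_nonneg hC.le hri.le)
    have h3 : C' * (r ^ i * s ^ i) ≤ C' * r ^ i := by
      have hm : r ^ i * s ^ i ≤ r ^ i * 1 := mul_le_mul_of_nonneg_left hsle hri.le
      rw [mul_one] at hm
      exact mul_le_mul_of_nonneg_left hm hC'
    have h4 : (C * K * (i:ℝ) ^ (b-1) + C') * r ^ i
        = C * r ^ i * (K * (i:ℝ) ^ (b-1)) + C' * r ^ i := by ring
    linarith
  -- lower bound setup
  obtain ⟨x₀, hx₀⟩ := poly_lb P hPlead
  set cl : ℝ := P.leadingCoeff / 2 with hcl_def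
  have hcl0 : 0 < cl := by rw [hcl_def]; exact half_pos hPlead
  set N₁ : ℕ := ⌈x₀⌉₊ with hN₁_def
  have hCcl : 0 < C * cl / 2 := half_pos (mul_pos hC hcl0)
  have hε : (0:ℝ) < (C * cl / 2) / (C' + 1) := div_pos hCcl (by linarith)
  have htend : Filter.Tendsto (fun n : ℕ => s ^ n) Filter.atTop (nhds 0) :=
    tendsto_pow_atTop_nhds_zero_of_lt_one hs0.le hs1
  have hev : ∀ᶠ n : ℕ in Filter.atTop, s ^ n < (C * cl / 2) / (C' + 1) :=
    htend.eventually (gt_mem_nhds hε)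
  obtain ⟨N₂, hN₂⟩ := Filter.eventually_atTop.mp hev
  have herr : ∀ n : ℕ, N₂ ≤ n → C' * s ^ n ≤ C * cl / 2 := by
    intro n hn
    have h1 := hN₂ n hn
    have h3 : C' * s ^ n ≤ C' * ((C * cl / 2) / (C' + 1)) :=
      mul_le_mul_of_nonneg_left h1.le hC'
    have h4 : C' * ((C * cl / 2) / (C' + 1)) ≤ C * cl / 2 := by
      have hd : (0:ℝ) < C' + 1 := by linarith
      calc C' * ((C * cl / 2) / (C' + 1)) = (C * cl / 2) * (C' / (C' + 1)) := by ring
      _ ≤ (C * cl / 2) * 1 :=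
          mul_le_mul_of_nonneg_left ((div_le_one hd).mpr (by linarith)) hCcl.le
      _ = C * cl / 2 := mul_one _
    linarith
  refine ⟨(C * cl / 2) / (r ^ (b-1) * 2 ^ (b-1)), (C * K + C' + 1) * (r / (r - 1)),
    div_pos hCcl (mul_pos (pow_pos hr0 _) (by positivity)),
    mul_pos (by nlinarith [mul_nonneg hC.le hK0]) (div_pos hr0 (by linarith)),
    2*b + N₁ + N₂ + 2, fun m hm => ?_⟩
  have hm1 : 1 ≤ m := by omega
  have hm1' : (1:ℝ) ≤ (m:ℝ) := by exact_mod_cast hm1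
  rw [hpow]
  constructor
  · -- lower bound
    set n : ℕ := m + 1 - b with hn_def
    have hnb : n + (b - 1) = m := by omega
    have hn1 : 1 ≤ n := by omega
    have hnN₁ : N₁ ≤ n := by omega
    have hnN₂ : N₂ ≤ n := by omega
    have hn2m : m ≤ 2 * n := by omega
    have hn1' : (1:ℝ) ≤ (n:ℝ) := by exact_mod_cast hn1
    have hx₀n : x₀ ≤ (n:ℝ) := le_trans (Nat.le_ceil x₀) (by exact_mod_cast hnN₁)
    have hPn : cl * (n:ℝ) ^ (b-1) ≤ P.eval (n:ℝ) := by
      have hp := hx₀ (n:ℝ) hx₀n (Nat.cast_nonneg n)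
      rwa [hPdeg] at hp
    have habs := abs_le.mp (h n hn1)
    have hrn : (0:ℝ) < r ^ n := pow_pos hr0 n
    have hnp : (1:ℝ) ≤ (n:ℝ) ^ (b-1) := one_le_pow₀ hn1'
    have hSn_lb : (C * cl / 2) * r ^ n * (n:ℝ) ^ (b-1) ≤ S n := by
      have h1 : C * r ^ n * P.eval (n:ℝ) - C' * (r ^ n * s ^ n) ≤ S n := by
        have h2 := habs.1
        rw [hpow, hsplit] at h2
        simp only [hS_def]
        linarith
      have h2 : C * cl * (r ^ n * (n:ℝ) ^ (b-1)) ≤ C * r ^ n * P.eval (n:ℝ) := by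
        calc C * cl * (r ^ n * (n:ℝ) ^ (b-1)) = (C * r ^ n) * (cl * (n:ℝ) ^ (b-1)) := by ring
        _ ≤ (C * r ^ n) * P.eval (n:ℝ) :=
            mul_le_mul_of_nonneg_left hPn (mul_nonneg hC.le hrn.le)
        _ = C * r ^ n * P.eval (n:ℝ) := rfl
      have h3 : C' * (r ^ n * s ^ n) ≤ (C * cl / 2) * r ^ n := by
        calc C' * (r ^ n * s ^ n) = (C' * s ^ n) * r ^ n := by ring
        _ ≤ (C * cl / 2) * r ^ n := mul_le_mul_of_nonneg_right (herr n hnN₂) hrn.le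
      have h5 : (C * cl / 2) * r ^ n * 1 ≤ (C * cl / 2) * r ^ n * (n:ℝ) ^ (b-1) :=
        mul_le_mul_of_nonneg_left hnp (mul_nonneg hCcl.le hrn.le)
      nlinarith
    -- S n ≤ partial sum
    have hSn_ub : S n ≤ ∑ i ∈ Finset.Icc 1 m, a i := by
      have hstep1 : S n ≤ ∑ j ∈ Finset.range b, a (n + j) := by
        refine Finset.sum_le_sum fun j _ => ?_
        exact mul_le_of_le_one_right (ha _) (hwle1 j)
      have hstep2 : ∑ j ∈ Finset.range b, a (n + j) = ∑ i ∈ Finset.Icc n m, a i := by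
        rw [← Finset.Ico_add_one_right_eq_Icc, Finset.sum_Ico_eq_sum_range]
        have hb' : m + 1 - n = b := by omega
        rw [hb']
      have hstep3 : ∑ i ∈ Finset.Icc n m, a i ≤ ∑ i ∈ Finset.Icc 1 m, a i :=
        Finset.sum_le_sum_of_subset_of_nonneg
          (Finset.Icc_subset_Icc_left hn1) (fun i _ _ => ha i)
      linarith
    -- combine
    have hrm : r ^ m = r ^ n * r ^ (b-1) := by rw [← pow_add, hnb]
    have hmn : (m:ℝ) ≤ 2 * (n:ℝ) := by exact_mod_cast hn2m
    have hmpow : (m:ℝ) ^ (b-1) ≤ 2 ^ (b-1) * (n:ℝ) ^ (b-1) := by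
      calc (m:ℝ) ^ (b-1) ≤ (2 * (n:ℝ)) ^ (b-1) :=
        pow_le_pow_left₀ (Nat.cast_nonneg m) hmn _
      _ = 2 ^ (b-1) * (n:ℝ) ^ (b-1) := mul_pow 2 (n:ℝ) (b-1)
    have key : (C * cl / 2) / (r ^ (b-1) * 2 ^ (b-1)) * r ^ m * (m:ℝ) ^ (b-1)
        ≤ (C * cl / 2) * r ^ n * (n:ℝ) ^ (b-1) := by
      rw [hrm]
      have hd : (0:ℝ) < r ^ (b-1) * 2 ^ (b-1) := mul_pos (pow_pos hr0 _) (by positivity)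
      rw [div_mul_eq_mul_div, div_mul_eq_mul_div, div_le_iff₀ hd]
      have h5 : (0:ℝ) ≤ C * cl / 2 * r ^ n := mul_nonneg hCcl.le hrn.le
      calc C * cl / 2 * (r ^ n * r ^ (b-1)) * (m:ℝ) ^ (b-1)
          = (C * cl / 2 * r ^ n) * (m:ℝ) ^ (b-1) * r ^ (b-1) := by ring
        _ ≤ (C * cl / 2 * r ^ n) * (2 ^ (b-1) * (n:ℝ) ^ (b-1)) * r ^ (b-1) :=
            mul_le_mul_of_nonneg_right (mul_le_mul_of_nonneg_left hmpow h5)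
              (pow_pos hr0 (b-1)).le
        _ = C * cl / 2 * r ^ n * (n:ℝ) ^ (b-1) * (r ^ (b-1) * 2 ^ (b-1)) := by ring
    linarith
  · -- upper bound
    have hT : ∑ i ∈ Finset.Icc 1 m, a i
        ≤ ∑ i ∈ Finset.Icc 1 m, (C * K * (m:ℝ)^(b-1) + C') * r ^ i := by
      refine Finset.sum_le_sum fun i hi => ?_
      obtain ⟨hi1, him⟩ := Finset.mem_Icc.mp hi
      have hi1' : (1:ℝ) ≤ (i:ℝ) := by exact_mod_cast hi1
      have him' : (i:ℝ) ≤ (m:ℝ) := by exact_mod_cast him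
      have h1 : (i:ℝ)^(b-1) ≤ (m:ℝ)^(b-1) := pow_le_pow_left₀ (Nat.cast_nonneg i) him' _
      have h2 := (haS i).trans (hSub i hi1)
      have h3 : (C * K * (i:ℝ)^(b-1) + C') * r ^ i ≤ (C * K * (m:ℝ)^(b-1) + C') * r ^ i := by
        have h4 : C * K * (i:ℝ)^(b-1) ≤ C * K * (m:ℝ)^(b-1) :=
          mul_le_mul_of_nonneg_left h1 (mul_nonneg hC.le hK0)
        exact mul_le_mul_of_nonneg_right (by linarith) (pow_pos hr0 i).le
      linarith
    rw [← Finset.mul_sum] at hT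
    have hgeo := geom_Icc_le r hr1 m
    have hcoef : (0:ℝ) ≤ C * K * (m:ℝ)^(b-1) + C' :=
      add_nonneg (mul_nonneg (mul_nonneg hC.le hK0) (by positivity)) hC'
    have hT2 : ∑ i ∈ Finset.Icc 1 m, a i ≤ (C * K * (m:ℝ)^(b-1) + C') * (r ^ m * (r/(r-1))) :=
      hT.trans (mul_le_mul_of_nonneg_left hgeo hcoef)
    have hmp1 : (1:ℝ) ≤ (m:ℝ)^(b-1) := one_le_pow₀ hm1'
    have hrr : (0:ℝ) < r / (r-1) := div_pos hr0 (by linarith)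
    have hfin : (C * K * (m:ℝ)^(b-1) + C') * (r ^ m * (r/(r-1)))
        ≤ (C * K + C' + 1) * (r / (r - 1)) * r ^ m * (m:ℝ) ^ (b-1) := by
      have h1 : C * K * (m:ℝ)^(b-1) + C' ≤ (C * K + C' + 1) * (m:ℝ)^(b-1) := by
        nlinarith [mul_le_mul_of_nonneg_left hmp1 hC']
      calc (C * K * (m:ℝ)^(b-1) + C') * (r ^ m * (r/(r-1)))
          ≤ ((C * K + C' + 1) * (m:ℝ)^(b-1)) * (r ^ m * (r/(r-1))) :=
            mul_le_mul_of_nonneg_right h1 (mul_nonneg (pow_pos hr0 m).le hrr.le)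
        _ = (C * K + C' + 1) * (r / (r - 1)) * r ^ m * (m:ℝ) ^ (b-1) := by ring
    linarith
end

section
/- Let K be a number field that is Galois over ℚ with Galois group isomorphic to ZMod 4 (cyclic of order 4). Then there is no element x ∈ K and rational number c < 0 with x² = c. In particular, K contains no square root of −3, so the field ℚ(ζ₃) = ℚ(√−3) cannot be embedded into any cyclic quartic extension of ℚ. -/
theorem no_imag_aux (K : Type*) [Field K] [NumberField K]
    [IsGalois ℚ K] (h : Nonempty ((K ≃ₐ[ℚ] K) ≃* Multiplicative (ZMod 4))) :
    ¬ ∃ (x : K) (c : ℚ), c < 0 ∧ x ^ 2 = algebraMap ℚ K c := by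
  rintro ⟨x, c, hc, hx2⟩
  obtain ⟨e⟩ := h
  have hx0 : x ≠ 0 := by
    rintro rfl
    have hcc : c = 0 := by simpa using hx2.symm
    linarith
  -- every automorphism sends x to ±x
  have hsign : ∀ g : K ≃ₐ[ℚ] K, g x = x ∨ g x = -x := by
    intro g
    have : (g x) ^ 2 = x ^ 2 := by
      rw [← map_pow, hx2, AlgEquiv.commutes]
    exact sq_eq_sq_iff_eq_or_eq_neg.mp this
  -- complex embedding
  let φ : K →ₐ[ℚ] ℂ := IsAlgClosed.lift
  letI : Algebra K ℂ := φ.toRingHom.toAlgebra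
  have hφalg : algebraMap K ℂ = φ.toRingHom := rfl
  letI : IsScalarTower ℚ K ℂ := IsScalarTower.of_algebraMap_eq (fun q => (φ.commutes q).symm)
  have hinj : Function.Injective φ := φ.toRingHom.injective
  have hφx2 : (φ x) ^ 2 = ((c : ℝ) : ℂ) := by
    rw [← map_pow, hx2, AlgHom.commutes, eq_ratCast (algebraMap ℚ ℂ) c]
    norm_cast
  -- conj (φ x) = - φ x
  have hconj : (starRingEnd ℂ) (φ x) = -(φ x) := by
    have h1 : ((starRingEnd ℂ) (φ x)) ^ 2 = (φ x) ^ 2 := by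
      rw [← map_pow, hφx2, Complex.conj_ofReal]
    rcases sq_eq_sq_iff_eq_or_eq_neg.mp h1 with h2 | h2
    · exfalso
      obtain ⟨r, hr⟩ := Complex.conj_eq_iff_real.mp h2
      rw [hr] at hφx2
      have : (r : ℂ) ^ 2 = ((c : ℝ) : ℂ) := hφx2
      have hr2 : r ^ 2 = (c : ℝ) := by exact_mod_cast this
      have hcr : (c : ℝ) < 0 := by exact_mod_cast hc
      nlinarith [sq_nonneg r]
    · exact h2
  -- the automorphism induced by complex conjugation
  let ψ : ℂ →ₐ[ℚ] ℂ := (Complex.conjAe.restrictScalars ℚ).toAlgHom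
  let τ : K ≃ₐ[ℚ] K := ψ.restrictNormal' K
  have hτ : ∀ y : K, φ (τ y) = (starRingEnd ℂ) (φ y) := by
    intro y
    have := ψ.restrictNormal_commutes K y
    exact this
  have hτx : τ x = -x := by
    apply hinj
    rw [hτ x, hconj, map_neg]
  have hττ : τ * τ = 1 := by
    ext y
    apply hinj
    rw [AlgEquiv.mul_apply, hτ, hτ, Complex.conj_conj]
    simp
  have hτne : τ ≠ 1 := by
    intro h1
    rw [h1] at hτx
    simp only [AlgEquiv.one_apply] at hτx
    apply hx0
    have : (2 : K) * x = 0 := by rw [two_mul]; nth_rewrite 1 [hτx]; ring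
    rcases mul_eq_zero.mp this with h | h
    · exact absurd h two_ne_zero
    · exact h
  -- transfer to ZMod 4
  set a : ZMod 4 := Multiplicative.toAdd (e τ) with ha
  have ha2 : a + a = 0 := by
    have : e τ * e τ = 1 := by rw [← map_mul, hττ, map_one]
    exact this
  have ha0 : a ≠ 0 := by
    intro h0
    apply hτne
    have : e τ = 1 := h0
    have := congrArg e.symm this
    simpa using this
  have key : ∀ b : ZMod 4, b + b = 0 → b ≠ 0 → b = 2 := by decide
  have haval : a = 2 := key a ha2 ha0
  set σ : K ≃ₐ[ℚ] K := e.symm (Multiplicative.ofAdd (1 : ZMod 4)) with hσ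
  have hτσ : τ = σ * σ := by
    apply e.injective
    rw [map_mul, hσ, MulEquiv.apply_symm_apply]
    show Multiplicative.ofAdd a = _
    rw [haval]
    rfl
  have : τ x = x := by
    rw [hτσ, AlgEquiv.mul_apply]
    rcases hsign σ with h1 | h1 <;> rw [h1] <;> simp [h1]
  rw [hτx] at this
  apply hx0
  have h2x : (2 : K) * x = 0 := by rw [two_mul]; nth_rewrite 1 [← this]; ring
  rcases mul_eq_zero.mp h2x with h | h
  · exact absurd h two_ne_zero
  · exact h

theorem no_imaginary_quadratic_in_cyclic_quartic (K : Type*) [Field K] [NumberField K]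
    [IsGalois ℚ K] (h : Nonempty ((K ≃ₐ[ℚ] K) ≃* Multiplicative (ZMod 4))) :
    (¬ ∃ (x : K) (c : ℚ), c < 0 ∧ x ^ 2 = algebraMap ℚ K c) ∧
    ∀ x : K, x ^ 2 ≠ (-3 : K) := by
  have main := no_imag_aux K h
  refine ⟨main, fun x hx => main ⟨x, -3, by norm_num, ?_⟩⟩
  rw [hx]
  simp [map_neg, map_ofNat]
end
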